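/- arXiv:2205.09090 — 6 statements merged into one kernel-verified Lean document; each statement's English description precedes it below -/
import Mathlib

section
/- For every n ≥ 1, 1 ≤ i ≤ n−1 and 0 ≤ j ≤ min(i−1, n−1−i), the special involution σ_{i,j} of S_n (the permutation of {1,…,n} that swaps k and k+j+1 for every k with i−j ≤ k ≤ i and fixes all other points) equals the product of adjacent transpositions s_i (s_{i−1} s_{i+1}) (s_{i−2} s_i s_{i+2}) ⋯ (s_{i−j} s_{i−j+2} ⋯ s_{i+j}) ⋯ (s_{i−2} s_i s_{i+2}) (s_{i−1} s_{i+1}) s_i, where s_k denotes the transposition of k and k+1; that is, σ_{i,j} = (∏_{t=0}^{j} B_t) · (∏_{t=0}^{j−1} B_{j−1−t}), where B_t = ∏_{m=0}^{t} s_{i−t+2m} (the factors within each block B_t commuting). -/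
/-- The action of the special involution `σ_{i,j}` of `S_n` on `{1,…,n}`:
it swaps `k` and `k+j+1` for every `k` with `i-j ≤ k ≤ i` and fixes all other points. -/
def sigmaFun (i j k : ℕ) : ℕ :=
  if i - j ≤ k ∧ k ≤ i then k + j + 1
  else if i + 1 ≤ k ∧ k ≤ i + j + 1 then k - (j + 1)
  else k

/-- The adjacent transposition `s_k = (k, k+1)`. -/
def adjT (k : ℕ) : Equiv.Perm ℕ := Equiv.swap k (k + 1)

/-- The block `B_t = ∏_{m=0}^{t} s_{i-t+2m}` (the factors pairwise commute). -/
def block (i t : ℕ) : Equiv.Perm ℕ :=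
  ((List.range (t + 1)).map (fun m => adjT (i - t + 2 * m))).prod

/-- The word `s_i (s_{i-1} s_{i+1}) ⋯ (s_{i-j} s_{i-j+2} ⋯ s_{i+j}) ⋯ (s_{i-1} s_{i+1}) s_i`,
i.e. `(∏_{t=0}^{j} B_t) · (∏_{t=0}^{j-1} B_{j-1-t})`. -/
def sigmaWord (i j : ℕ) : Equiv.Perm ℕ :=
  ((List.range (j + 1)).map (fun t => block i t)).prod *
    ((List.range j).map (fun t => block i (j - 1 - t))).prod

/-- Pointwise formula for `block i t`. -/
def bfun (i t k : ℕ) : ℕ :=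
  if i - t ≤ k ∧ k ≤ i + t + 1 then
    (if (k - (i - t)) % 2 = 0 then k + 1 else k - 1)
  else k

lemma block_apply (i t : ℕ) (ht : t ≤ i) : ∀ k, block i t k = bfun i t k := by
  induction t generalizing i with
  | zero =>
    intro k
    simp only [block, List.range_succ, List.range_zero, List.nil_append, List.map_cons,
      List.map_nil, List.prod_cons, List.prod_nil, mul_one, adjT, bfun, mul_zero, add_zero,
      Nat.sub_zero, Equiv.swap_apply_def]
    split_ifs <;> omega
  | succ t ih =>
    have hsplit : block i (t + 1) = adjT (i - (t + 1)) * block (i + 1) t := by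
      unfold block
      rw [List.range_succ_eq_map]
      simp only [List.map_cons, List.map_map, List.prod_cons, mul_zero, add_zero]
      have hfun : ((fun m => adjT (i - (t + 1) + 2 * m)) ∘ Nat.succ) =
          (fun m => adjT (i + 1 - t + 2 * m)) := by
        funext m
        simp only [Function.comp]
        congr 1
        omega
      rw [hfun]
    intro k
    rw [hsplit]
    simp only [Equiv.Perm.mul_apply]
    rw [ih (i + 1) (by omega) k]
    simp only [adjT, bfun, Equiv.swap_apply_def]
    split_ifs <;> omega

/-- The prefix product `A = B_0 B_1 ⋯ B_{j-1}`. -/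
def paPerm (i j : ℕ) : Equiv.Perm ℕ := ((List.range j).map (fun t => block i t)).prod

lemma pa_succ (i j : ℕ) : paPerm i (j + 1) = paPerm i j * block i j := by
  simp [paPerm, List.range_succ]

/-- Pointwise formula for `paPerm i j`. -/
def afun (i j k : ℕ) : ℕ :=
  if i + 1 - j ≤ k ∧ k ≤ i + j then
    (if (k - (i + 1 - j)) % 2 = 0 then i + 1 + (k - (i + 1 - j)) / 2
     else i + 1 - j + (k - (i + 1 - j)) / 2)
  else k

lemma pa_apply (i j : ℕ) (hj : j ≤ i) : ∀ k, paPerm i j k = afun i j k := by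
  induction j with
  | zero =>
    intro k
    simp only [paPerm, List.range_zero, List.map_nil, List.prod_nil,
      Equiv.Perm.coe_one, id_eq, afun]
    split_ifs <;> omega
  | succ j ih =>
    intro k
    rw [pa_succ]
    simp only [Equiv.Perm.mul_apply]
    rw [block_apply i j (by omega) k, ih (by omega)]
    simp only [afun, bfun]
    split_ifs <;> omega

/-- Pointwise formula for `(paPerm i j)⁻¹`. -/
def gfun (i j k : ℕ) : ℕ :=
  if i + 1 ≤ k ∧ k ≤ i + j then i + 1 - j + 2 * (k - (i + 1))
  else if i + 1 - j ≤ k ∧ k ≤ i then i + 2 - j + 2 * (k - (i + 1 - j))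
  else k

lemma af_gf (i j : ℕ) (hj : j ≤ i) : ∀ k, afun i j (gfun i j k) = k := by
  intro k
  simp only [afun, gfun]
  split_ifs <;> omega

lemma pa_inv_apply (i j : ℕ) (hj : j ≤ i) : ∀ k, (paPerm i j)⁻¹ k = gfun i j k := by
  intro k
  have h1 : paPerm i j (gfun i j k) = k := by
    rw [pa_apply i j hj]; exact af_gf i j hj k
  conv_lhs => rw [← h1]
  rw [← Equiv.Perm.mul_apply, inv_mul_cancel, Equiv.Perm.one_apply]

lemma block_sq (i t : ℕ) (ht : t ≤ i) : block i t * block i t = 1 := by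
  ext k
  simp only [Equiv.Perm.mul_apply, Equiv.Perm.one_apply]
  rw [block_apply i t ht, block_apply i t ht]
  simp only [bfun]
  split_ifs <;> omega

lemma pa_crev (i j : ℕ) (hj : j ≤ i) :
    paPerm i j * ((List.range j).map (fun t => block i (j - 1 - t))).prod = 1 := by
  induction j with
  | zero => simp [paPerm]
  | succ j ih =>
    have h1 : ((List.range (j + 1)).map (fun t => block i (j + 1 - 1 - t))).prod =
        block i j * ((List.range j).map (fun t => block i (j - 1 - t))).prod := by
      rw [List.range_succ_eq_map]
      simp only [List.map_cons, List.map_map, List.prod_cons]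
      have h2 : j + 1 - 1 - 0 = j := by omega
      have hfun : ((fun t => block i (j + 1 - 1 - t)) ∘ Nat.succ) =
          (fun t => block i (j - 1 - t)) := by
        funext t
        simp only [Function.comp]
        congr 1
        omega
      rw [h2, hfun]
    rw [pa_succ, h1]
    have : paPerm i j * block i j * (block i j *
        ((List.range j).map (fun t => block i (j - 1 - t))).prod) =
        paPerm i j * (block i j * block i j) *
        ((List.range j).map (fun t => block i (j - 1 - t))).prod := by
      group
    rw [this, block_sq i j (by omega), mul_one]
    exact ih (by omega)

lemma word_eq (i j : ℕ) (hj : j ≤ i) :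
    sigmaWord i j = paPerm i j * block i j * (paPerm i j)⁻¹ := by
  have hcrev : ((List.range j).map (fun t => block i (j - 1 - t))).prod = (paPerm i j)⁻¹ :=
    inv_eq_of_mul_eq_one_right (pa_crev i j hj) |>.symm
  rw [sigmaWord, hcrev]
  show paPerm i (j + 1) * (paPerm i j)⁻¹ = _
  rw [pa_succ]

/-- The special involution `σ_{i,j}` equals the product of adjacent transpositions
`s_i (s_{i-1} s_{i+1}) (s_{i-2} s_i s_{i+2}) ⋯ (s_{i-j} s_{i-j+2} ⋯ s_{i+j}) ⋯
(s_{i-2} s_i s_{i+2}) (s_{i-1} s_{i+1}) s_i`. -/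
theorem special_involution_eq_word (n i j : ℕ) (hn : 1 ≤ n)
    (hi1 : 1 ≤ i) (hi2 : i ≤ n - 1) (hj : j ≤ min (i - 1) (n - 1 - i)) :
    ∀ k : ℕ, sigmaWord i j k = sigmaFun i j k := by
  have hji : j + 1 ≤ i := by omega
  intro k
  rw [word_eq i j (by omega)]
  simp only [Equiv.Perm.mul_apply]
  rw [pa_inv_apply i j (by omega), block_apply i j (by omega), pa_apply i j (by omega)]
  simp only [afun, bfun, gfun, sigmaFun]
  split_ifs <;> omega
end

section
/- Every product of pairwise distant special involutions in S_n is a 321-avoiding involution: if d = σ_{i_1,j_1} σ_{i_2,j_2} ⋯ σ_{i_r,j_r} is a product of special involutions whose extended supports pairwise intersect in at most one element, then d is an involution (d² = identity) and d is 321-avoiding, i.e., there are no indices p < q < r with d(p) > d(q) > d(r). -/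
/-- The special involution `σ_{i,j}` of `S_n`: the permutation of `{1,…,n}` that swaps
`k` and `k+j+1` for every `k` with `i-j ≤ k ≤ i` (these transpositions are pairwise
disjoint, hence commute) and fixes all other points. -/
def sigmaPerm (i j : ℕ) : Equiv.Perm ℕ :=
  ((List.range (j + 1)).map (fun t => Equiv.swap (i - j + t) (i + t + 1))).prod

/-- The parameter constraints `1 ≤ i ≤ n-1` and `0 ≤ j ≤ min(i-1, n-1-i)` for a special
involution `σ_{i,j}` of `S_n`. -/
def SpecialParams (n i j : ℕ) : Prop :=
  1 ≤ i ∧ i ≤ n - 1 ∧ j ≤ min (i - 1) (n - 1 - i)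

/-- The extended support `{i-j-1, i-j, …, i+j+2}` of `σ_{i,j}`. -/
def extSupport (i j : ℕ) : Finset ℕ := Finset.Icc (i - j - 1) (i + j + 2)

/-- Two special involutions (given by their parameters) are distant if their extended
supports have at most one common element. -/
def Distant (p q : ℕ × ℕ) : Prop :=
  (extSupport p.1 p.2 ∩ extSupport q.1 q.2).card ≤ 1

/-- `w ∈ S_n` is 321-avoiding: there are no indices `1 ≤ p < q < r ≤ n` with
`w(p) > w(q) > w(r)`. -/
def Avoids321 (n : ℕ) (w : Equiv.Perm ℕ) : Prop :=
  ∀ p q r : ℕ, 1 ≤ p → p < q → q < r → r ≤ n → ¬ (w q < w p ∧ w r < w q)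

lemma prodSwaps_apply (m : ℕ) : ∀ a b x : ℕ, a + m ≤ b →
    (((List.range m).map (fun t => Equiv.swap (a + t) (b + t))).prod : Equiv.Perm ℕ) x =
      if a ≤ x ∧ x < a + m then x + (b - a)
      else if b ≤ x ∧ x < b + m then x - (b - a)
      else x := by
  induction m with
  | zero =>
    intro a b x h
    simp only [List.range_zero, List.map_nil, List.prod_nil, Equiv.Perm.one_apply]
    split_ifs <;> omega
  | succ m ih =>
    intro a b x h
    rw [List.range_succ_eq_map]
    simp only [List.map_cons, List.map_map, List.prod_cons, Equiv.Perm.mul_apply, add_zero]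
    have hmap : (List.range m).map ((fun t => Equiv.swap (a + t) (b + t)) ∘ Nat.succ)
        = (List.range m).map (fun t => Equiv.swap (a + 1 + t) (b + 1 + t)) := by
      apply List.map_congr_left
      intro t ht
      simp only [Function.comp_apply]
      rw [show a + (t + 1) = a + 1 + t from by omega, show b + (t + 1) = b + 1 + t from by omega]
    rw [hmap, ih (a + 1) (b + 1) x (by omega)]
    have hba : b + 1 - (a + 1) = b - a := by omega
    rw [hba]
    split_ifs with h1 h2 h3 h4 h5 h6 h7 <;>
      rw [Equiv.swap_apply_def] <;> split_ifs <;> omega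

lemma sigmaPerm_apply (i j x : ℕ) (h : j ≤ i) :
    sigmaPerm i j x = if i - j ≤ x ∧ x ≤ i then x + (j + 1)
      else if i + 1 ≤ x ∧ x ≤ i + j + 1 then x - (j + 1) else x := by
  have heq : sigmaPerm i j
      = (((List.range (j + 1)).map (fun t => Equiv.swap ((i - j) + t) ((i + 1) + t))).prod) := by
    unfold sigmaPerm
    congr 1
    apply List.map_congr_left
    intro t ht
    rw [show i + t + 1 = i + 1 + t from by omega]
  rw [heq, prodSwaps_apply (j + 1) (i - j) (i + 1) x (by omega)]
  split_ifs <;> omega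

/-- Trichotomy for the value of `sigmaPerm`. -/
lemma sigma_tri (i j x : ℕ) (h : j ≤ i) :
    (i - j ≤ x ∧ x ≤ i ∧ sigmaPerm i j x = x + j + 1) ∨
    (i + 1 ≤ x ∧ x ≤ i + j + 1 ∧ sigmaPerm i j x = x - (j + 1)) ∨
    ((x < i - j ∨ i + j + 1 < x) ∧ sigmaPerm i j x = x) := by
  rw [sigmaPerm_apply i j x h]
  split_ifs <;> omega

lemma sigma_fix (i j x : ℕ) (h : j ≤ i) (hx : ¬ (i - j ≤ x ∧ x ≤ i + j + 1)) :
    sigmaPerm i j x = x := by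
  rcases sigma_tri i j x h with ⟨a, b, e⟩ | ⟨a, b, e⟩ | ⟨a, e⟩ <;> first | exact e | (exfalso; omega)

lemma sigma_mem (i j x : ℕ) (h : j ≤ i) (hx : i - j ≤ x ∧ x ≤ i + j + 1) :
    i - j ≤ sigmaPerm i j x ∧ sigmaPerm i j x ≤ i + j + 1 := by
  rcases sigma_tri i j x h with ⟨a, b, e⟩ | ⟨a, b, e⟩ | ⟨a, e⟩ <;> rw [e] <;> omega

lemma sigma_block_cases (i j x : ℕ) (h : j ≤ i) (hx : i - j ≤ x ∧ x ≤ i + j + 1) :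
    (x ≤ i ∧ sigmaPerm i j x = x + j + 1) ∨ (i + 1 ≤ x ∧ sigmaPerm i j x = x - (j + 1)) := by
  rcases sigma_tri i j x h with ⟨a, b, e⟩ | ⟨a, b, e⟩ | ⟨a, e⟩
  · exact Or.inl ⟨b, e⟩
  · exact Or.inr ⟨a, e⟩
  · exfalso; omega

lemma sigma_invol (i j x : ℕ) (h : j ≤ i) : sigmaPerm i j (sigmaPerm i j x) = x := by
  rcases sigma_tri i j x h with ⟨a, b, e⟩ | ⟨a, b, e⟩ | ⟨a, e⟩ <;> rw [e]
  · rcases sigma_tri i j (x + j + 1) h with ⟨a', b', e'⟩ | ⟨a', b', e'⟩ | ⟨a', e'⟩ <;>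
      rw [e'] <;> omega
  · rcases sigma_tri i j (x - (j + 1)) h with ⟨a', b', e'⟩ | ⟨a', b', e'⟩ | ⟨a', e'⟩ <;>
      rw [e'] <;> omega
  · rw [e]

/-- Distant special involutions have separated supports. -/
lemma distant_sep {p q : ℕ × ℕ} (hp : p.2 + 1 ≤ p.1) (hq : q.2 + 1 ≤ q.1) (hd : Distant p q) :
    p.1 + p.2 + 1 < q.1 - q.2 ∨ q.1 + q.2 + 1 < p.1 - p.2 := by
  by_contra hcon
  push_neg at hcon
  set m := max (p.1 - p.2 - 1) (q.1 - q.2 - 1) with hm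
  have hsub : ({m, m + 1} : Finset ℕ) ⊆ extSupport p.1 p.2 ∩ extSupport q.1 q.2 := by
    intro y hy
    simp only [Finset.mem_insert, Finset.mem_singleton] at hy
    simp only [extSupport, Finset.mem_inter, Finset.mem_Icc]
    omega
  have hcard : ({m, m + 1} : Finset ℕ).card = 2 := by
    rw [Finset.card_insert_of_notMem (by simp), Finset.card_singleton]
  have := Finset.card_le_card hsub
  unfold Distant at hd
  omega

lemma distant_symm : Symmetric Distant := by
  intro p q hd
  unfold Distant at *
  rwa [Finset.inter_comm]

/-- The product fixes points outside all blocks. -/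
lemma prod_fix (L : List (ℕ × ℕ)) (hL : ∀ p ∈ L, p.2 ≤ p.1) (x : ℕ)
    (hx : ∀ p ∈ L, ¬ (p.1 - p.2 ≤ x ∧ x ≤ p.1 + p.2 + 1)) :
    (L.map (fun p => sigmaPerm p.1 p.2)).prod x = x := by
  induction L with
  | nil => simp
  | cons q L ih =>
    simp only [List.map_cons, List.prod_cons, Equiv.Perm.mul_apply]
    rw [ih (fun p hp => hL p (List.mem_cons_of_mem _ hp))
        (fun p hp => hx p (List.mem_cons_of_mem _ hp))]
    exact sigma_fix q.1 q.2 x (hL q (List.mem_cons_self)) (hx q (List.mem_cons_self))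

/-- On the block of `p ∈ L` the product acts as `σ_p`. -/
lemma prod_eq_sigma (L : List (ℕ × ℕ)) (hL : ∀ p ∈ L, p.2 + 1 ≤ p.1)
    (hdist : L.Pairwise Distant) (p : ℕ × ℕ) (hp : p ∈ L) (x : ℕ)
    (hx : p.1 - p.2 ≤ x ∧ x ≤ p.1 + p.2 + 1) :
    (L.map (fun p => sigmaPerm p.1 p.2)).prod x = sigmaPerm p.1 p.2 x := by
  induction L with
  | nil => cases hp
  | cons q L ih =>
    obtain ⟨hhead, htail⟩ := List.pairwise_cons.mp hdist
    simp only [List.map_cons, List.prod_cons, Equiv.Perm.mul_apply]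
    rcases List.mem_cons.mp hp with rfl | hp'
    · rw [prod_fix L (fun r hr => le_of_lt (hL r (List.mem_cons_of_mem _ hr))) x ?_]
      intro r hr
      have hsep := distant_sep (hL p (List.mem_cons_self))
        (hL r (List.mem_cons_of_mem _ hr)) (hhead r hr)
      omega
    · rw [ih (fun r hr => hL r (List.mem_cons_of_mem _ hr)) htail hp']
      have hpi : p.2 ≤ p.1 := le_of_lt (hL p hp)
      have hmem := sigma_mem p.1 p.2 x hpi hx
      apply sigma_fix q.1 q.2 _ (le_of_lt (hL q (List.mem_cons_self)))
      have hsep := distant_sep (hL q (List.mem_cons_self)) (hL p (List.mem_cons_of_mem _ hp'))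
        (hhead p hp')
      omega

/-- Every product of pairwise distant special involutions in `S_n` is a 321-avoiding
involution. -/
theorem product_of_distant_specials_is_321_avoiding_involution
    (n : ℕ) (L : List (ℕ × ℕ))
    (hspec : ∀ p ∈ L, SpecialParams n p.1 p.2)
    (hdist : L.Pairwise Distant) :
    (L.map (fun p => sigmaPerm p.1 p.2)).prod * (L.map (fun p => sigmaPerm p.1 p.2)).prod = 1 ∧
      Avoids321 n (L.map (fun p => sigmaPerm p.1 p.2)).prod := by
  have hL : ∀ p ∈ L, p.2 + 1 ≤ p.1 := by
    intro p hp
    obtain ⟨h1, h2, h3⟩ := hspec p hp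
    omega
  set f := (L.map (fun p => sigmaPerm p.1 p.2)).prod with hf
  -- the key dichotomy for f applied at a point
  have hval : ∀ x : ℕ,
      (∃ p ∈ L, (p.1 - p.2 ≤ x ∧ x ≤ p.1 + p.2 + 1) ∧ f x = sigmaPerm p.1 p.2 x) ∨
      ((∀ p ∈ L, ¬ (p.1 - p.2 ≤ x ∧ x ≤ p.1 + p.2 + 1)) ∧ f x = x) := by
    intro x
    by_cases hx : ∃ p ∈ L, p.1 - p.2 ≤ x ∧ x ≤ p.1 + p.2 + 1
    · obtain ⟨p, hp, hb⟩ := hx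
      exact Or.inl ⟨p, hp, hb, prod_eq_sigma L hL hdist p hp x hb⟩
    · push_neg at hx
      exact Or.inr ⟨fun p hp => by have := hx p hp; omega, prod_fix L
        (fun p hp => le_of_lt (hL p hp)) x (fun p hp => by have := hx p hp; omega)⟩
  constructor
  · ext x
    simp only [Equiv.Perm.mul_apply, Equiv.Perm.one_apply]
    rcases hval x with ⟨p, hp, hb, he⟩ | ⟨hfix, he⟩
    · rw [he]
      have hpi : p.2 ≤ p.1 := le_of_lt (hL p hp)
      have hmem := sigma_mem p.1 p.2 x hpi hb
      rw [prod_eq_sigma L hL hdist p hp _ hmem]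
      exact sigma_invol p.1 p.2 x hpi
    · rw [he, he]
  · intro p q r h1 hpq hqr hrn
    rintro ⟨hqp, hrq⟩
    -- a descent x < y with f y < f x forces x and y in a common block
    have hdesc : ∀ x y : ℕ, x < y → f y < f x →
        ∃ s ∈ L, (s.1 - s.2 ≤ x ∧ x ≤ s.1 + s.2 + 1) ∧ (s.1 - s.2 ≤ y ∧ y ≤ s.1 + s.2 + 1) := by
      intro x y hxy hdxy
      rcases hval x with ⟨s, hs, hbx, hex⟩ | ⟨hfixx, hex⟩ <;>
        rcases hval y with ⟨t, ht, hby, hey⟩ | ⟨hfixy, hey⟩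
      · -- both in blocks
        by_cases hst : s = t
        · subst hst; exact ⟨s, hs, hbx, hby⟩
        · exfalso
          have hsep := distant_sep (hL s hs) (hL t ht)
            (haveI : Std.Symm Distant := ⟨fun a b h => distant_symm h⟩; hdist.forall hs ht hst)
          have hmx := sigma_mem s.1 s.2 x (le_of_lt (hL s hs)) hbx
          have hmy := sigma_mem t.1 t.2 y (le_of_lt (hL t ht)) hby
          rw [hex, hey] at hdxy
          omega
      · exfalso
        have hny := hfixy s hs
        have hmx := sigma_mem s.1 s.2 x (le_of_lt (hL s hs)) hbx
        rw [hex, hey] at hdxy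
        omega
      · exfalso
        have hnx := hfixx t ht
        have hmy := sigma_mem t.1 t.2 y (le_of_lt (hL t ht)) hby
        rw [hex, hey] at hdxy
        omega
      · exfalso
        rw [hex, hey] at hdxy
        omega
    obtain ⟨s, hs, hbp, hbq⟩ := hdesc p q hpq hqp
    obtain ⟨t, ht, hbq', hbr⟩ := hdesc q r hqr hrq
    have hst : s = t := by
      by_contra hne
      have hsep := distant_sep (hL s hs) (hL t ht) (haveI : Std.Symm Distant := ⟨fun a b h => distant_symm h⟩; hdist.forall hs ht hne)
      omega
    subst hst
    have hsi : s.2 ≤ s.1 := le_of_lt (hL s hs)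
    have hvp : f p = sigmaPerm s.1 s.2 p := prod_eq_sigma L hL hdist s hs p hbp
    have hvq : f q = sigmaPerm s.1 s.2 q := prod_eq_sigma L hL hdist s hs q hbq
    have hvr : f r = sigmaPerm s.1 s.2 r := prod_eq_sigma L hL hdist s hs r hbr
    have hcp := sigma_block_cases s.1 s.2 p hsi hbp
    have hcq := sigma_block_cases s.1 s.2 q hsi hbq
    have hcr := sigma_block_cases s.1 s.2 r hsi hbr
    rw [hvp, hvq] at hqp
    rw [hvq, hvr] at hrq
    omega
end

section
/- For every n ≥ 1 and every a with 0 ≤ a ≤ ⌊n/2⌋, the number of Kostant involutions in S_n whose cycle decomposition contains exactly a transpositions equals the binomial coefficient C(n−a, a). -/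
/-- A Kostant involution in `S_n`: a product of pairwise distant special involutions
(the identity being the empty product). -/
def IsKostant (n : ℕ) (w : Equiv.Perm ℕ) : Prop :=
  ∃ L : List (ℕ × ℕ),
    (∀ p ∈ L, SpecialParams n p.1 p.2) ∧
    L.Pairwise Distant ∧
    w = (L.map (fun p => sigmaPerm p.1 p.2)).prod

/-- `ki n a` is the number of Kostant involutions in `S_n` whose cycle decomposition
contains exactly `a` transpositions, i.e. with exactly `2a` non-fixed points. -/
noncomputable def ki (n a : ℕ) : ℕ :=
  Set.ncard {w : Equiv.Perm ℕ | IsKostant n w ∧ Set.ncard {k : ℕ | w k ≠ k} = 2 * a}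

namespace KostantAux

/-! ### Block permutations -/

/-- The permutation of `ℕ` swapping `m+t ↔ m+t+c` for `t < c`. -/
def blockPerm (m c : ℕ) : Equiv.Perm ℕ :=
  ((List.range c).map (fun t => Equiv.swap (m + t) (m + t + c))).prod

lemma prod_apply_fixed {l : List (Equiv.Perm ℕ)} {k : ℕ} (h : ∀ f ∈ l, f k = k) :
    l.prod k = k := by
  induction l with
  | nil => simp
  | cons g t ih =>
    simp only [List.prod_cons, Equiv.Perm.mul_apply]
    rw [ih (fun f hf => h f (List.mem_cons_of_mem _ hf)), h g (List.mem_cons_self)]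

lemma prod_apply_of_mem {l : List (Equiv.Perm ℕ)} (hl : l.Pairwise Equiv.Perm.Disjoint)
    {f : Equiv.Perm ℕ} (hf : f ∈ l) {k : ℕ} (hk : f k ≠ k) : l.prod k = f k := by
  induction l with
  | nil => simp at hf
  | cons g t ih =>
    rcases List.mem_cons.1 hf with rfl | hf'
    · have ht : ∀ h ∈ t, h k = k := by
        intro h hh
        rcases (List.pairwise_cons.1 hl).1 h hh k with h1 | h1
        · exact absurd h1 hk
        · exact h1
      simp only [List.prod_cons, Equiv.Perm.mul_apply, prod_apply_fixed ht]
    · have hgd : f.Disjoint g := ((List.pairwise_cons.1 hl).1 f hf').symm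
      have h2 : t.prod k = f k := ih (List.pairwise_cons.1 hl).2 hf'
      have h3 : g (f k) = f k := by
        rcases hgd (f k) with h | h
        · exact absurd (f.injective h) hk
        · exact h
      simp only [List.prod_cons, Equiv.Perm.mul_apply, h2, h3]

lemma swap_disjoint {a b c d : ℕ} (h1 : a ≠ c) (h2 : a ≠ d) (h3 : b ≠ c) (h4 : b ≠ d) :
    (Equiv.swap a b).Disjoint (Equiv.swap c d) := by
  intro x
  by_cases hx : x = a ∨ x = b
  · right; rcases hx with rfl | rfl <;> exact Equiv.swap_apply_of_ne_of_ne ‹_› ‹_›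
  · left; push_neg at hx; exact Equiv.swap_apply_of_ne_of_ne hx.1 hx.2

lemma blockPerm_pairwise (m c : ℕ) :
    ((List.range c).map (fun t => Equiv.swap (m + t) (m + t + c))).Pairwise
      Equiv.Perm.Disjoint := by
  have h0 : (List.range c).Pairwise (fun t t' => t < t' ∧ t' < c) :=
    (List.pairwise_lt_range (n := c)).imp_of_mem (fun ha hb h => ⟨h, List.mem_range.1 hb⟩)
  exact h0.map _ (fun t t' h =>
    swap_disjoint (by omega) (by omega) (by omega) (by omega))

lemma blockPerm_apply_left {m c k : ℕ} (h1 : m ≤ k) (h2 : k < m + c) :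
    blockPerm m c k = k + c := by
  have hk : m + (k - m) = k := by omega
  have hmem : Equiv.swap (m + (k - m)) (m + (k - m) + c) ∈
      (List.range c).map (fun t => Equiv.swap (m + t) (m + t + c)) :=
    List.mem_map.2 ⟨k - m, List.mem_range.2 (by omega), rfl⟩
  have hne : Equiv.swap (m + (k - m)) (m + (k - m) + c) k ≠ k := by
    rw [hk, Equiv.swap_apply_left]; omega
  have := prod_apply_of_mem (blockPerm_pairwise m c) hmem hne
  rw [blockPerm, this, hk, Equiv.swap_apply_left]

lemma blockPerm_apply_right {m c k : ℕ} (h1 : m + c ≤ k) (h2 : k < m + 2 * c) :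
    blockPerm m c k = k - c := by
  have hk : m + (k - m - c) + c = k := by omega
  have hmem : Equiv.swap (m + (k - m - c)) (m + (k - m - c) + c) ∈
      (List.range c).map (fun t => Equiv.swap (m + t) (m + t + c)) :=
    List.mem_map.2 ⟨k - m - c, List.mem_range.2 (by omega), rfl⟩
  have hne : Equiv.swap (m + (k - m - c)) (m + (k - m - c) + c) k ≠ k := by
    rw [hk, Equiv.swap_apply_right]; omega
  have := prod_apply_of_mem (blockPerm_pairwise m c) hmem hne
  rw [blockPerm, this, hk, Equiv.swap_apply_right]; omega

lemma blockPerm_apply_out {m c k : ℕ} (h : k < m ∨ m + 2 * c ≤ k) :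
    blockPerm m c k = k := by
  apply prod_apply_fixed
  intro f hf
  obtain ⟨t, ht, rfl⟩ := List.mem_map.1 hf
  have ht' := List.mem_range.1 ht
  exact Equiv.swap_apply_of_ne_of_ne (by omega) (by omega)

lemma blockPerm_moved {m c k : ℕ} : blockPerm m c k ≠ k ↔ m ≤ k ∧ k < m + 2 * c := by
  constructor
  · intro h
    by_contra hc
    exact h (blockPerm_apply_out (by omega))
  · rintro ⟨h1, h2⟩
    by_cases h3 : k < m + c
    · rw [blockPerm_apply_left h1 h3]; omega
    · rw [blockPerm_apply_right (by omega) h2]; omega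

lemma blockPerm_disjoint {m c m' c' : ℕ} (h : m + 2 * c ≤ m' ∨ m' + 2 * c' ≤ m) :
    (blockPerm m c).Disjoint (blockPerm m' c') := by
  intro x
  by_cases h1 : blockPerm m c x = x
  · left; exact h1
  · right
    have h2 := blockPerm_moved.1 h1
    by_contra h3
    have h4 := blockPerm_moved.1 h3
    omega

/-! ### Canonical block lists -/

def Gap (p q : ℕ × ℕ) : Prop := p.1 + 2 * p.2 + 1 ≤ q.1

instance : IsTrans (ℕ × ℕ) Gap := ⟨fun p q r h1 h2 => by unfold Gap at *; omega⟩

def wB (B : List (ℕ × ℕ)) : Equiv.Perm ℕ := (B.map (fun p => blockPerm p.1 p.2)).prod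

def tot (B : List (ℕ × ℕ)) : ℕ := (B.map Prod.snd).sum

lemma tot_cons (p : ℕ × ℕ) (t : List (ℕ × ℕ)) : tot (p :: t) = p.2 + tot t := by
  simp [tot]

lemma wB_cons (p : ℕ × ℕ) (t : List (ℕ × ℕ)) :
    wB (p :: t) = blockPerm p.1 p.2 * wB t := by
  simp [wB]

def Canon (n : ℕ) (d : ℕ × ℕ) (B : List (ℕ × ℕ)) : Prop :=
  (∀ p ∈ B, 1 ≤ p.2 ∧ p.1 + 2 * p.2 ≤ n + 1) ∧ List.Chain Gap d B

lemma chain_gap_forall {d : ℕ × ℕ} {B : List (ℕ × ℕ)} (h : List.Chain Gap d B) :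
    ∀ p ∈ B, Gap d p :=
  fun p hp => (List.pairwise_cons.1 (List.isChain_iff_pairwise.1 h)).1 p hp

lemma gap_disjoint_wB {d : ℕ × ℕ} {B : List (ℕ × ℕ)} (h : ∀ p ∈ B, Gap d p) :
    (blockPerm d.1 d.2).Disjoint (wB B) := by
  apply Equiv.Perm.disjoint_prod_right
  intro g hg
  obtain ⟨p, hp, rfl⟩ := List.mem_map.1 hg
  exact blockPerm_disjoint (Or.inl (by have := h p hp; unfold Gap at this; omega))

lemma disjoint_mul_moved {f g : Equiv.Perm ℕ} (h : f.Disjoint g) (k : ℕ) :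
    (f * g) k ≠ k ↔ (f k ≠ k ∨ g k ≠ k) := by
  by_cases hg : g k = k
  · simp [Equiv.Perm.mul_apply, hg]
  · have hfg : f (g k) = g k := by
      rcases h (g k) with h1 | h1
      · exact h1
      · exact absurd (g.injective h1) hg
    simp [Equiv.Perm.mul_apply, hfg, hg]

lemma wB_moved {B : List (ℕ × ℕ)} : ∀ {d : ℕ × ℕ}, List.Chain Gap d B → ∀ k,
    (wB B k ≠ k ↔ ∃ p ∈ B, p.1 ≤ k ∧ k < p.1 + 2 * p.2) := by
  induction B with
  | nil => intro d _ k; simp [wB]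
  | cons q t ih =>
    intro d hc k
    have hct : List.Chain Gap q t := (List.chain_cons.1 hc).2
    have hd : (blockPerm q.1 q.2).Disjoint (wB t) := gap_disjoint_wB (chain_gap_forall hct)
    rw [wB_cons, disjoint_mul_moved hd, blockPerm_moved, ih hct]
    simp only [List.mem_cons]
    constructor
    · rintro (h | ⟨p, hp, h⟩)
      · exact ⟨q, Or.inl rfl, h⟩
      · exact ⟨p, Or.inr hp, h⟩
    · rintro ⟨p, (rfl | hp), h⟩
      · exact Or.inl h
      · exact Or.inr ⟨p, hp, h⟩

def movedF : List (ℕ × ℕ) → Finset ℕ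
  | [] => ∅
  | p :: t => Finset.Ico p.1 (p.1 + 2 * p.2) ∪ movedF t

lemma mem_movedF {B : List (ℕ × ℕ)} {k : ℕ} :
    k ∈ movedF B ↔ ∃ p ∈ B, p.1 ≤ k ∧ k < p.1 + 2 * p.2 := by
  induction B with
  | nil => simp [movedF]
  | cons p t ih =>
    simp only [movedF, Finset.mem_union, Finset.mem_Ico, ih, List.mem_cons]
    constructor
    · rintro (h | ⟨q, hq, h⟩)
      · exact ⟨p, Or.inl rfl, h⟩
      · exact ⟨q, Or.inr hq, h⟩
    · rintro ⟨q, (rfl | hq), h⟩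
      · exact Or.inl h
      · exact Or.inr ⟨q, hq, h⟩

lemma movedF_card {B : List (ℕ × ℕ)} : ∀ {d : ℕ × ℕ}, List.Chain Gap d B →
    (movedF B).card = 2 * tot B := by
  induction B with
  | nil => intro d _; simp [movedF, tot]
  | cons p t ih =>
    intro d hc
    have hct := (List.chain_cons.1 hc).2
    have hdisj : Disjoint (Finset.Ico p.1 (p.1 + 2 * p.2)) (movedF t) := by
      rw [Finset.disjoint_left]
      intro x hx hx2
      obtain ⟨q, hq, h⟩ := mem_movedF.1 hx2
      have hg := chain_gap_forall hct q hq
      rw [Finset.mem_Ico] at hx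
      unfold Gap at hg; omega
    show (Finset.Ico p.1 (p.1 + 2 * p.2) ∪ movedF t).card = 2 * tot (p :: t)
    rw [Finset.card_union_of_disjoint hdisj, Nat.card_Ico, ih hct, tot_cons]
    omega

lemma wB_ncard {B : List (ℕ × ℕ)} {d : ℕ × ℕ} (hc : List.Chain Gap d B) :
    Set.ncard {k : ℕ | wB B k ≠ k} = 2 * tot B := by
  have hset : {k : ℕ | wB B k ≠ k} = ↑(movedF B) := by
    ext k
    rw [Set.mem_setOf_eq, wB_moved hc, Finset.mem_coe, mem_movedF]
  rw [hset, Set.ncard_coe_finset, movedF_card hc]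

lemma wB_head {d p : ℕ × ℕ} {t : List (ℕ × ℕ)} (hc : List.Chain Gap d (p :: t))
    (hp2 : 1 ≤ p.2) : wB (p :: t) p.1 = p.1 + p.2 := by
  have hct := (List.chain_cons.1 hc).2
  have hfix : wB t p.1 = p.1 := by
    by_contra h
    obtain ⟨q, hq, h1, h2⟩ := (wB_moved hct p.1).1 h
    have := chain_gap_forall hct q hq
    unfold Gap at this; omega
  rw [wB_cons, Equiv.Perm.mul_apply, hfix, blockPerm_apply_left le_rfl (by omega)]

lemma wB_moved_ge {d p : ℕ × ℕ} {t : List (ℕ × ℕ)} (hc : List.Chain Gap d (p :: t))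
    {k : ℕ} (h : wB (p :: t) k ≠ k) : p.1 ≤ k := by
  obtain ⟨q, hq, h1, h2⟩ := (wB_moved hc k).1 h
  rcases List.mem_cons.1 hq with rfl | hq'
  · exact h1
  · have := chain_gap_forall (List.chain_cons.1 hc).2 q hq'
    unfold Gap at this; omega

lemma wB_injOn_aux {B : List (ℕ × ℕ)} : ∀ {B' : List (ℕ × ℕ)} {d : ℕ × ℕ},
    (∀ p ∈ B, 1 ≤ p.2) → (∀ p ∈ B', 1 ≤ p.2) →
    List.Chain Gap d B → List.Chain Gap d B' → wB B = wB B' → B = B' := by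
  induction B with
  | nil =>
    intro B' d _ h2 _ hc' hw
    cases B' with
    | nil => rfl
    | cons q t' =>
      exfalso
      have hq2 := h2 q (List.mem_cons_self)
      have he : wB (q :: t') q.1 = q.1 + q.2 := wB_head hc' hq2
      have h1 : wB ([] : List (ℕ × ℕ)) q.1 = q.1 := by simp [wB]
      rw [← hw, h1] at he
      omega
  | cons p t ih =>
    intro B' d h1 h2 hc hc' hw
    cases B' with
    | nil =>
      exfalso
      have hp2 := h1 p (List.mem_cons_self)
      have he : wB (p :: t) p.1 = p.1 + p.2 := wB_head hc hp2
      have h1' : wB ([] : List (ℕ × ℕ)) p.1 = p.1 := by simp [wB]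
      rw [hw, h1'] at he
      omega
    | cons q t' =>
      have hp2 := h1 p (List.mem_cons_self)
      have hq2 := h2 q (List.mem_cons_self)
      have hmp : wB (p :: t) p.1 ≠ p.1 := by rw [wB_head hc hp2]; omega
      have hmq : wB (q :: t') q.1 ≠ q.1 := by rw [wB_head hc' hq2]; omega
      have hle1 : q.1 ≤ p.1 := wB_moved_ge hc' (hw ▸ hmp)
      have hle2 : p.1 ≤ q.1 := wB_moved_ge hc (hw ▸ hmq)
      have h11 : p.1 = q.1 := le_antisymm hle2 hle1
      have h22 : p.2 = q.2 := by
        have e1 : wB (p :: t) p.1 = p.1 + p.2 := wB_head hc hp2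
        have e2 : wB (q :: t') q.1 = q.1 + q.2 := wB_head hc' hq2
        rw [← hw, ← h11] at e2
        have := e1.symm.trans e2
        omega
      have hpq : p = q := Prod.ext h11 h22
      subst hpq
      have hwt : wB t = wB t' := by
        have := hw
        rw [wB_cons, wB_cons] at this
        exact mul_left_cancel this
      have := ih (fun r hr => h1 r (List.mem_cons_of_mem _ hr))
        (fun r hr => h2 r (List.mem_cons_of_mem _ hr))
        (List.chain_cons.1 hc).2 (List.chain_cons.1 hc').2 hwt
      rw [this]

/-! ### Relation to special involutions -/

lemma sigmaPerm_eq_blockPerm {i j : ℕ} (h : j ≤ i) :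
    sigmaPerm i j = blockPerm (i - j) (j + 1) := by
  unfold sigmaPerm blockPerm
  congr 1
  apply List.map_congr_left
  intro t _
  rw [show i + t + 1 = i - j + t + (j + 1) by omega]

lemma Icc_inter (a b c d : ℕ) :
    Finset.Icc a b ∩ Finset.Icc c d = Finset.Icc (max a c) (min b d) := by
  ext x
  simp only [Finset.mem_inter, Finset.mem_Icc]
  omega

lemma distant_iff {i j i' j' : ℕ} (hj : j < i) (hj' : j' < i') :
    Distant (i, j) (i', j') ↔
      (Gap (i - j, j + 1) (i' - j', j' + 1) ∨ Gap (i' - j', j' + 1) (i - j, j + 1)) := by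
  unfold Distant extSupport Gap
  rw [Icc_inter, Nat.card_Icc]
  simp only
  omega

lemma exists_min_fst {L : List (ℕ × ℕ)} (h : L ≠ []) :
    ∃ p ∈ L, ∀ q ∈ L, p.1 ≤ q.1 := by
  induction L with
  | nil => exact absurd rfl h
  | cons p t ih =>
    rcases t.eq_nil_or_concat with rfl | _
    · exact ⟨p, List.mem_cons_self, by
        intro q hq
        rcases List.mem_cons.1 hq with rfl | hq'
        · exact le_rfl
        · simp at hq'⟩
    · have ht : t ≠ [] := by rintro rfl; simp_all
      obtain ⟨r, hrt, hr⟩ := ih ht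
      by_cases hpr : p.1 ≤ r.1
      · refine ⟨p, List.mem_cons_self, ?_⟩
        intro q hq
        rcases List.mem_cons.1 hq with rfl | hq'
        · exact le_rfl
        · exact le_trans hpr (hr q hq')
      · refine ⟨r, List.mem_cons_of_mem _ hrt, ?_⟩
        intro q hq
        rcases List.mem_cons.1 hq with rfl | hq'
        · omega
        · exact hr q hq'

def GapOr (p q : ℕ × ℕ) : Prop := Gap p q ∨ Gap q p

lemma exists_canon_aux (n : ℕ) : ∀ (N : ℕ) (L : List (ℕ × ℕ)), L.length = N →
    (∀ p ∈ L, 1 ≤ p.2 ∧ p.1 + 2 * p.2 ≤ n + 1) →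
    L.Pairwise GapOr →
    ∀ d : ℕ × ℕ, (∀ p ∈ L, Gap d p) →
    ∃ B, Canon n d B ∧ B.Perm L := by
  intro N
  induction N with
  | zero =>
    intro L hL _ _ d _
    rw [List.length_eq_zero_iff] at hL
    subst hL
    exact ⟨[], ⟨by simp, List.Chain.nil⟩, List.Perm.refl _⟩
  | succ N ih =>
    intro L hL hb hpw d hd
    have hne : L ≠ [] := by rintro rfl; simp at hL
    obtain ⟨p, hpL, hmin⟩ := exists_min_fst hne
    obtain ⟨E, hperm⟩ : ∃ E, L.Perm (p :: E) := ⟨_, List.perm_cons_erase hpL⟩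
    have hmemE : ∀ q ∈ E, q ∈ L := fun q hq =>
      hperm.symm.subset (List.mem_cons_of_mem _ hq)
    have hpw' : (p :: E).Pairwise GapOr :=
      (hperm.pairwise_iff (fun h => h.symm)).1 hpw
    have hhead : ∀ q ∈ E, Gap p q := by
      intro q hq
      have hOr := (List.pairwise_cons.1 hpw').1 q hq
      have hm := hmin q (hmemE q hq)
      rcases hOr with h | h
      · exact h
      · exfalso; unfold Gap at h; omega
    have hlen : E.length = N := by
      have := hperm.length_eq
      simp only [List.length_cons] at this
      omega
    obtain ⟨B', hB', hB'p⟩ := ih E hlen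
      (fun q hq => hb q (hmemE q hq))
      (List.pairwise_cons.1 hpw').2 p hhead
    refine ⟨p :: B', ⟨?_, ?_⟩, ?_⟩
    · intro q hq
      rcases List.mem_cons.1 hq with rfl | hq'
      · exact hb q hpL
      · exact hB'.1 q hq'
    · exact List.Chain.cons (hd p hpL) hB'.2
    · exact (hB'p.cons p).trans hperm.symm

lemma isKostant_canon {n : ℕ} {w : Equiv.Perm ℕ} (h : IsKostant n w) :
    ∃ B, Canon n (0, 0) B ∧ wB B = w := by
  obtain ⟨L, hP, hD, rfl⟩ := h
  have hji : ∀ p ∈ L, p.2 < p.1 := by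
    intro p hp
    have := hP p hp
    unfold SpecialParams at this
    omega
  set Lb := L.map (fun p => (p.1 - p.2, p.2 + 1)) with hLb
  have hb : ∀ q ∈ Lb, 1 ≤ q.2 ∧ q.1 + 2 * q.2 ≤ n + 1 := by
    intro q hq
    obtain ⟨p, hp, rfl⟩ := List.mem_map.1 hq
    have := hP p hp
    unfold SpecialParams at this
    simp only
    omega
  have hD' : L.Pairwise (fun p q => Distant p q ∧ p.2 < p.1 ∧ q.2 < q.1) :=
    hD.imp_of_mem (fun ha hb h => ⟨h, hji _ ha, hji _ hb⟩)
  have hpw : Lb.Pairwise GapOr := by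
    apply hD'.map
    rintro ⟨i, j⟩ ⟨i', j'⟩ ⟨hd, hji1, hji2⟩
    exact (distant_iff hji1 hji2).1 hd
  have hd0 : ∀ q ∈ Lb, Gap (0, 0) q := by
    intro q hq
    obtain ⟨p, hp, rfl⟩ := List.mem_map.1 hq
    have := hji p hp
    unfold Gap
    simp only
    omega
  obtain ⟨B, hC, hBp⟩ := exists_canon_aux n Lb.length Lb rfl hb hpw (0, 0) hd0
  refine ⟨B, hC, ?_⟩
  have hcomm : (B.map (fun q => blockPerm q.1 q.2)).Pairwise Commute := by
    have hgap : B.Pairwise Gap :=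
      (List.pairwise_cons.1 (List.isChain_iff_pairwise.1 hC.2)).2
    apply hgap.map
    intro q r h
    exact (blockPerm_disjoint (Or.inl (by unfold Gap at h; omega))).commute
  have h1 : wB B = (Lb.map (fun q => blockPerm q.1 q.2)).prod :=
    List.Perm.prod_eq' (hBp.map _) hcomm
  have h2 : Lb.map (fun q => blockPerm q.1 q.2) = L.map (fun p => sigmaPerm p.1 p.2) := by
    rw [hLb, List.map_map]
    apply List.map_congr_left
    intro p hp
    exact (sigmaPerm_eq_blockPerm (le_of_lt (hji p hp))).symm
  rw [h1, h2]

lemma canon_isKostant {n : ℕ} {B : List (ℕ × ℕ)} (hC : Canon n (0, 0) B) :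
    IsKostant n (wB B) := by
  have hfst : ∀ p ∈ B, 1 ≤ p.1 := by
    intro p hp
    have := chain_gap_forall hC.2 p hp
    unfold Gap at this
    omega
  refine ⟨B.map (fun q => (q.1 + q.2 - 1, q.2 - 1)), ?_, ?_, ?_⟩
  · intro q hq
    obtain ⟨p, hp, rfl⟩ := List.mem_map.1 hq
    have h1 := hC.1 p hp
    have h2 := hfst p hp
    unfold SpecialParams
    simp only
    omega
  · have hgap : B.Pairwise Gap :=
      (List.pairwise_cons.1 (List.isChain_iff_pairwise.1 hC.2)).2
    have hgap' : B.Pairwise (fun p q => Gap p q ∧ (1 ≤ p.2 ∧ 1 ≤ p.1) ∧ (1 ≤ q.2 ∧ 1 ≤ q.1)) :=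
      hgap.imp_of_mem (fun ha hb h =>
        ⟨h, ⟨(hC.1 _ ha).1, hfst _ ha⟩, ⟨(hC.1 _ hb).1, hfst _ hb⟩⟩)
    apply hgap'.map
    rintro ⟨m, c⟩ ⟨m', c'⟩ ⟨hg, ⟨hc1, hm1⟩, ⟨hc1', hm1'⟩⟩
    have hji1 : c - 1 < m + c - 1 := by omega
    have hji2 : c' - 1 < m' + c' - 1 := by omega
    rw [distant_iff hji1 hji2]
    left
    unfold Gap at *
    simp only
    omega
  · unfold wB
    rw [List.map_map]
    apply congrArg
    apply List.map_congr_left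
    intro p hp
    have h1 := (hC.1 p hp).1
    have h2 := hfst p hp
    simp only [Function.comp_apply]
    rw [sigmaPerm_eq_blockPerm (by omega : p.2 - 1 ≤ p.1 + p.2 - 1)]
    congr 1 <;> omega

/-! ### The subset encoding -/

def toSet : ℕ → List (ℕ × ℕ) → Finset ℕ
  | _, [] => ∅
  | b, p :: t => Finset.Ico (p.1 - b) (p.1 - b + p.2) ∪ toSet (b + p.2) t

lemma toSet_lb {B : List (ℕ × ℕ)} : ∀ {b : ℕ} {d : ℕ × ℕ},
    List.Chain Gap d B → 2 * b ≤ d.1 + 2 * d.2 →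
    ∀ x ∈ toSet b B, d.1 + 2 * d.2 + 1 ≤ x + b := by
  induction B with
  | nil => intro b d _ _ x hx; simp [toSet] at hx
  | cons p t ih =>
    intro b d hc hb x hx
    have hg : Gap d p := (List.chain_cons.1 hc).1
    have hct := (List.chain_cons.1 hc).2
    unfold Gap at hg
    rcases Finset.mem_union.1 hx with h | h
    · have := Finset.mem_Ico.1 h
      omega
    · have := ih hct (by omega) x h
      unfold Gap at this
      omega

lemma toSet_card {B : List (ℕ × ℕ)} : ∀ {b : ℕ} {d : ℕ × ℕ},
    List.Chain Gap d B → 2 * b ≤ d.1 + 2 * d.2 →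
    (toSet b B).card = tot B := by
  induction B with
  | nil => intro b d _ _; simp [toSet, tot]
  | cons p t ih =>
    intro b d hc hb
    have hg : Gap d p := (List.chain_cons.1 hc).1
    have hct := (List.chain_cons.1 hc).2
    unfold Gap at hg
    have hdisj : Disjoint (Finset.Ico (p.1 - b) (p.1 - b + p.2)) (toSet (b + p.2) t) := by
      rw [Finset.disjoint_left]
      intro x hx hx2
      have h1 := Finset.mem_Ico.1 hx
      have h2 := toSet_lb hct (by omega) x hx2
      unfold Gap at h2
      omega
    show (Finset.Ico (p.1 - b) (p.1 - b + p.2) ∪ toSet (b + p.2) t).card = tot (p :: t)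
    rw [Finset.card_union_of_disjoint hdisj, Nat.card_Ico,
      ih hct (by omega), tot_cons]
    omega

lemma canon_ub {n : ℕ} {B : List (ℕ × ℕ)} : ∀ {d : ℕ × ℕ},
    (∀ p ∈ B, 1 ≤ p.2 ∧ p.1 + 2 * p.2 ≤ n + 1) → List.Chain Gap d B →
    d.1 + 2 * d.2 ≤ n + 1 →
    d.1 + 2 * d.2 + 2 * tot B + B.length ≤ n + 1 := by
  induction B with
  | nil => intro d _ _ hd; simpa [tot]
  | cons p t ih =>
    intro d hb hc hd
    have hg : Gap d p := (List.chain_cons.1 hc).1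
    have hct := (List.chain_cons.1 hc).2
    have hp := hb p (List.mem_cons_self)
    have := ih (fun q hq => hb q (List.mem_cons_of_mem _ hq)) hct hp.2
    unfold Gap at hg
    rw [tot_cons]
    simp only [List.length_cons]
    omega

lemma toSet_ub {n : ℕ} {B : List (ℕ × ℕ)} : ∀ {b : ℕ} {d : ℕ × ℕ},
    (∀ p ∈ B, 1 ≤ p.2 ∧ p.1 + 2 * p.2 ≤ n + 1) → List.Chain Gap d B →
    2 * b ≤ d.1 + 2 * d.2 →
    ∀ x ∈ toSet b B, x + b + tot B ≤ n := by
  induction B with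
  | nil => intro b d _ _ _ x hx; simp [toSet] at hx
  | cons p t ih =>
    intro b d hb hc hJ x hx
    have hg : Gap d p := (List.chain_cons.1 hc).1
    have hct := (List.chain_cons.1 hc).2
    have hp := hb p (List.mem_cons_self)
    unfold Gap at hg
    rw [tot_cons]
    rcases Finset.mem_union.1 hx with h | h
    · have h1 := Finset.mem_Ico.1 h
      have h2 := canon_ub (fun q hq => hb q (List.mem_cons_of_mem _ hq)) hct hp.2
      have h3 : tot t ≤ 2 * tot t + t.length := by omega
      omega
    · have := ih (fun q hq => hb q (List.mem_cons_of_mem _ hq)) hct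
        (by omega) x h
      omega

lemma toSet_mem_head {b : ℕ} {p : ℕ × ℕ} {t : List (ℕ × ℕ)} (hp : 1 ≤ p.2) :
    p.1 - b ∈ toSet b (p :: t) := by
  apply Finset.mem_union_left
  rw [Finset.mem_Ico]
  omega

lemma toSet_inj {B : List (ℕ × ℕ)} : ∀ {B' : List (ℕ × ℕ)} {b : ℕ} {d : ℕ × ℕ},
    (∀ p ∈ B, 1 ≤ p.2) → (∀ p ∈ B', 1 ≤ p.2) →
    List.Chain Gap d B → List.Chain Gap d B' → 2 * b ≤ d.1 + 2 * d.2 →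
    toSet b B = toSet b B' → B = B' := by
  induction B with
  | nil =>
    intro B' b d _ h2 _ hc' hJ he
    cases B' with
    | nil => rfl
    | cons q t' =>
      exfalso
      have := toSet_mem_head (t := t') (b := b) (h2 q (List.mem_cons_self))
      rw [← he] at this
      simp [toSet] at this
  | cons p t ih =>
    intro B' b d h1 h2 hc hc' hJ he
    cases B' with
    | nil =>
      exfalso
      have := toSet_mem_head (t := t) (b := b) (h1 p (List.mem_cons_self))
      rw [he] at this
      simp [toSet] at this
    | cons q t' =>
      have hp2 := h1 p (List.mem_cons_self)
      have hq2 := h2 q (List.mem_cons_self)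
      have hgp : Gap d p := (List.chain_cons.1 hc).1
      have hgq : Gap d q := (List.chain_cons.1 hc').1
      have hct := (List.chain_cons.1 hc).2
      have hct' := (List.chain_cons.1 hc').2
      unfold Gap at hgp hgq
      have hminB : ∀ x ∈ toSet b (p :: t), p.1 - b ≤ x := by
        intro x hx
        rcases Finset.mem_union.1 hx with h | h
        · have := Finset.mem_Ico.1 h; omega
        · have := toSet_lb hct (by omega) x h
          unfold Gap at this; omega
      have hminB' : ∀ x ∈ toSet b (q :: t'), q.1 - b ≤ x := by
        intro x hx
        rcases Finset.mem_union.1 hx with h | h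
        · have := Finset.mem_Ico.1 h; omega
        · have := toSet_lb hct' (by omega) x h
          unfold Gap at this; omega
      have hmemB : p.1 - b ∈ toSet b (p :: t) := toSet_mem_head hp2
      have hmemB' : q.1 - b ∈ toSet b (q :: t') := toSet_mem_head hq2
      have h1a := hminB' (p.1 - b) (he ▸ hmemB)
      have h1b := hminB (q.1 - b) (he.symm ▸ hmemB')
      have h11 : p.1 = q.1 := by omega
      have h22 : p.2 = q.2 := by
        by_contra hne
        have key : ∀ (r s : ℕ × ℕ) (u u' : List (ℕ × ℕ)),
            r.1 = s.1 → 1 ≤ r.2 → r.2 < s.2 → List.Chain Gap r u →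
            toSet b (r :: u) = toSet b (s :: u') → 2 * b ≤ r.1 → False := by
          intro r s u u' hrs hr2 hlt hcu heq hbr
          have hxin : r.1 - b + r.2 ∈ toSet b (s :: u') := by
            apply Finset.mem_union_left
            rw [Finset.mem_Ico]
            omega
          rw [← heq] at hxin
          rcases Finset.mem_union.1 hxin with h | h
          · have := Finset.mem_Ico.1 h; omega
          · have := toSet_lb hcu (by omega) _ h
            unfold Gap at this; omega
        rcases Nat.lt_or_ge p.2 q.2 with hlt | hge
        · exact key p q t t' h11 hp2 hlt hct he (by omega)
        · have hlt' : q.2 < p.2 := by omega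
          exact key q p t' t h11.symm hq2 hlt' hct' he.symm (by omega)
      have hpq : p = q := Prod.ext h11 h22
      subst hpq
      have hte : toSet (b + p.2) t = toSet (b + p.2) t' := by
        ext x
        constructor
        · intro hx
          have hx2 : x ∈ toSet b (p :: t') := by
            rw [← he]
            exact Finset.mem_union_right _ hx
          rcases Finset.mem_union.1 hx2 with h | h
          · exfalso
            have hlo := toSet_lb hct (by omega) x hx
            have := Finset.mem_Ico.1 h
            unfold Gap at hlo; omega
          · exact h
        · intro hx
          have hx2 : x ∈ toSet b (p :: t) := by
            rw [he]
            exact Finset.mem_union_right _ hx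
          rcases Finset.mem_union.1 hx2 with h | h
          · exfalso
            have hlo := toSet_lb hct' (by omega) x hx
            have := Finset.mem_Ico.1 h
            unfold Gap at hlo; omega
          · exact h
      have := ih (fun r hr => h1 r (List.mem_cons_of_mem _ hr))
        (fun r hr => h2 r (List.mem_cons_of_mem _ hr))
        hct hct' (by omega) hte
      rw [this]

lemma exists_canon_of_finset (n : ℕ) : ∀ (N : ℕ) (S : Finset ℕ) (b : ℕ) (d : ℕ × ℕ),
    S.card = N →
    (∀ x ∈ S, d.1 + 2 * d.2 + 1 ≤ x + b ∧ x + b + S.card ≤ n) →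
    ∃ B, (∀ p ∈ B, 1 ≤ p.2 ∧ p.1 + 2 * p.2 ≤ n + 1) ∧ List.Chain Gap d B ∧
      tot B = S.card ∧ toSet b B = S := by
  intro N
  induction N using Nat.strong_induction_on with
  | _ N ih =>
    intro S b d hN hS
    rcases S.eq_empty_or_nonempty with rfl | hne
    · exact ⟨[], by simp, List.Chain.nil, by simp [tot, toSet], by simp [toSet]⟩
    · classical
      set y := S.min' hne with hy_def
      have hy : y ∈ S := S.min'_mem hne
      have hex : ∃ c, y + c ∉ S := by
        refine ⟨S.max' hne + 1 - y, fun h => ?_⟩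
        have h1 := S.le_max' _ h
        have h2 := S.min'_le _ (S.max'_mem hne)
        omega
      set c := Nat.find hex with hc_def
      have hcs : y + c ∉ S := Nat.find_spec hex
      have hc1 : 1 ≤ c := by
        rcases Nat.eq_zero_or_pos c with h | h
        · exfalso; apply hcs; rw [h]; simpa using hy
        · exact h
      have hrun : ∀ t < c, y + t ∈ S := by
        intro t ht
        by_contra h
        exact Nat.find_min hex ht h
      have hrun' : Finset.Ico y (y + c) ⊆ S := by
        intro x hx
        rw [Finset.mem_Ico] at hx
        have : y + (x - y) ∈ S := hrun (x - y) (by omega)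
        rwa [show y + (x - y) = x by omega] at this
      have hcS : c ≤ S.card := by
        have := Finset.card_le_card hrun'
        rwa [Nat.card_Ico, show y + c - y = c by omega] at this
      set S' := S \ Finset.Ico y (y + c) with hS'_def
      have hcard' : S'.card = S.card - c := by
        rw [hS'_def, Finset.card_sdiff_of_subset hrun', Nat.card_Ico, show y + c - y = c by omega]
      have hmin_le : ∀ x ∈ S, y ≤ x := fun x hx => S.min'_le x hx
      have hS'mem : ∀ x ∈ S', y + c + 1 ≤ x := by
        intro x hx
        rw [hS'_def, Finset.mem_sdiff, Finset.mem_Ico] at hx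
        have h1 := hmin_le x hx.1
        have h2 : x ≠ y + c := fun h => hcs (h ▸ hx.1)
        omega
      have hS'lt : S'.card < N := by omega
      obtain ⟨B', hb', hch', htot', hts'⟩ := ih S'.card hS'lt S' (b + c) (y + b, c) rfl
        (by
          intro x hx
          have h1 := hS'mem x hx
          have h2 := hS (x) (by rw [hS'_def, Finset.mem_sdiff] at hx; exact hx.1)
          constructor
          · simp only; omega
          · omega)
      refine ⟨(y + b, c) :: B', ?_, ?_, ?_, ?_⟩
      · intro p hp
        rcases List.mem_cons.1 hp with rfl | hp'
        · constructor
          · exact hc1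
          · have hx0 : y + (c - 1) ∈ S := hrun (c - 1) (by omega)
            have := (hS _ hx0).2
            simp only
            omega
        · exact hb' p hp'
      · refine List.Chain.cons ?_ hch'
        have := (hS y hy).1
        unfold Gap
        simp only
        omega
      · rw [tot_cons, htot', hcard']
        simp only
        omega
      · show Finset.Ico (y + b - b) (y + b - b + c) ∪ toSet (b + c) B' = S
        rw [hts', show y + b - b = y by omega, hS'_def]
        exact Finset.union_sdiff_of_subset hrun'

end KostantAux

open KostantAux in
/-- The number of Kostant involutions in `S_n` with exactly `a` transpositions is the
binomial coefficient `C(n-a, a)`. -/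
theorem ki_eq_choose (n a : ℕ) (hn : 1 ≤ n) (ha : a ≤ n / 2) :
    ki n a = Nat.choose (n - a) a := by
  classical
  have han : a ≤ n := le_trans ha (Nat.div_le_self n 2)
  set K := {w : Equiv.Perm ℕ | IsKostant n w ∧ Set.ncard {k : ℕ | w k ≠ k} = 2 * a} with hK
  set C := {B : List (ℕ × ℕ) | Canon n (0, 0) B ∧ tot B = a} with hC
  set P := (Finset.powersetCard a (Finset.Icc 1 (n - a)) : Finset (Finset ℕ)) with hP
  have hKC : K = wB '' C := by
    ext w
    constructor
    · rintro ⟨hKo, hcount⟩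
      obtain ⟨B, hCa, hwB⟩ := isKostant_canon hKo
      have hn2 : Set.ncard {k : ℕ | wB B k ≠ k} = 2 * tot B := wB_ncard hCa.2
      rw [hwB] at hn2
      refine ⟨B, ⟨hCa, by omega⟩, hwB⟩
    · rintro ⟨B, ⟨hCa, htot⟩, rfl⟩
      refine ⟨canon_isKostant hCa, ?_⟩
      rw [wB_ncard hCa.2, htot]
  have hPC : (↑P : Set (Finset ℕ)) = toSet 0 '' C := by
    ext S
    rw [Finset.mem_coe, hP, Finset.mem_powersetCard]
    constructor
    · rintro ⟨hsub, hcard⟩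
      obtain ⟨B, hb, hch, htot, hts⟩ := exists_canon_of_finset n S.card S 0 (0, 0) rfl
        (by
          intro x hx
          have := hsub hx
          rw [Finset.mem_Icc] at this
          constructor
          · simp only; omega
          · rw [hcard]; omega)
      exact ⟨B, ⟨⟨hb, hch⟩, by rw [htot, hcard]⟩, hts⟩
    · rintro ⟨B, ⟨⟨hb, hch⟩, htot⟩, rfl⟩
      constructor
      · intro x hx
        rw [Finset.mem_Icc]
        have h1 := toSet_lb hch (by simp) x hx
        have h2 := toSet_ub hb hch (by simp) x hx
        omega
      · rw [toSet_card hch (by simp), htot]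
  have hinjW : Set.InjOn wB C := by
    rintro B ⟨hB, _⟩ B' ⟨hB', _⟩ h
    exact wB_injOn_aux (fun p hp => (hB.1 p hp).1) (fun p hp => (hB'.1 p hp).1)
      hB.2 hB'.2 h
  have hinjS : Set.InjOn (toSet 0) C := by
    rintro B ⟨hB, _⟩ B' ⟨hB', _⟩ h
    exact toSet_inj (fun p hp => (hB.1 p hp).1) (fun p hp => (hB'.1 p hp).1)
      hB.2 hB'.2 (by simp) h
  have e1 : K.encard = C.encard := by rw [hKC]; exact hinjW.encard_image
  have e2 : (↑P : Set (Finset ℕ)).encard = C.encard := by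
    rw [hPC]; exact hinjS.encard_image
  have e3 : (↑P : Set (Finset ℕ)).encard = (P.card : ℕ∞) :=
    Set.encard_coe_eq_coe_finsetCard P
  have hPcard : P.card = (n - a).choose a := by
    rw [hP, Finset.card_powersetCard, Nat.card_Icc]
    norm_num
  have : ki n a = K.ncard := rfl
  rw [this, Set.ncard_def, e1, ← e2, e3]
  simp [hPcard]
end

section
/- For every n ≥ 1, the total number of Kostant involutions in S_n equals the Fibonacci number F_{n+1}, where the Fibonacci sequence is normalized so that F_0 = 0, F_1 = 1 and F_{m} = F_{m−1} + F_{m−2} (so the counts for n = 1, 2, 3, 4, 5 are 1, 2, 3, 5, 8). -/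
/-- The total number of Kostant involutions in `S_n`. -/
noncomputable def kiTotal (n : ℕ) : ℕ :=
  Set.ncard {w : Equiv.Perm ℕ | IsKostant n w}

namespace KIAux

lemma specialParams_iff {n i j : ℕ} :
    SpecialParams n i j ↔ 1 ≤ i ∧ i ≤ n - 1 ∧ j ≤ i - 1 ∧ j ≤ n - 1 - i := by
  unfold SpecialParams; omega

instance decSpecial (n i j : ℕ) : Decidable (SpecialParams n i j) :=
  decidable_of_iff' _ specialParams_iff

instance decDistant (p q : ℕ × ℕ) : Decidable (Distant p q) := by
  unfold Distant; infer_instance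

lemma icc_inter_icc (a b c d : ℕ) :
    Finset.Icc a b ∩ Finset.Icc c d = Finset.Icc (max a c) (min b d) := by
  ext x; simp [Finset.mem_inter, Finset.mem_Icc]; omega

lemma distant_iff {p q : ℕ × ℕ} (h : p.2 + 1 ≤ p.1) (h' : q.2 + 1 ≤ q.1) :
    Distant p q ↔ (p.1 + p.2 + 3 ≤ q.1 - q.2 ∨ q.1 + q.2 + 3 ≤ p.1 - p.2) := by
  unfold Distant extSupport
  rw [icc_inter_icc, Nat.card_Icc]
  omega

lemma distant_symm {p q : ℕ × ℕ} (h : Distant p q) : Distant q p := by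
  unfold Distant at *; rwa [Finset.inter_comm]

instance : Std.Symm Distant := ⟨fun _ _ h => distant_symm h⟩

lemma distant_ne {p q : ℕ × ℕ} (h : Distant p q) : p ≠ q := by
  rintro rfl
  unfold Distant extSupport at h
  rw [Finset.inter_self, Nat.card_Icc] at h
  omega

/-! ### Products of disjoint swaps -/

lemma prod_swaps_fixed (l : List (ℕ × ℕ)) (x : ℕ)
    (h : ∀ p ∈ l, p.1 ≠ x ∧ p.2 ≠ x) :
    ((l.map fun p => Equiv.swap p.1 p.2).prod) x = x := by
  induction l with
  | nil => rfl
  | cons a t ih =>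
    have ht := ih (fun p hp => h p (List.mem_cons_of_mem _ hp))
    have ha := h a (List.mem_cons_self)
    simp only [List.map_cons, List.prod_cons, Equiv.Perm.mul_apply, ht]
    exact Equiv.swap_apply_of_ne_of_ne (Ne.symm ha.1) (Ne.symm ha.2)

lemma prod_swaps_mem (l : List (ℕ × ℕ))
    (hd : l.Pairwise fun p q => p.1 ≠ q.1 ∧ p.1 ≠ q.2 ∧ p.2 ≠ q.1 ∧ p.2 ≠ q.2)
    {a b : ℕ} (hm : (a, b) ∈ l) :
    ((l.map fun p => Equiv.swap p.1 p.2).prod) a = b ∧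
    ((l.map fun p => Equiv.swap p.1 p.2).prod) b = a := by
  induction l with
  | nil => cases hm
  | cons c t ih =>
    rw [List.pairwise_cons] at hd
    rcases List.mem_cons.mp hm with h | h
    · subst h
      have h1 : ∀ p ∈ t, p.1 ≠ a ∧ p.2 ≠ a := by
        intro p hp
        have := hd.1 p hp
        exact ⟨Ne.symm this.1, Ne.symm this.2.1⟩
      have h2 : ∀ p ∈ t, p.1 ≠ b ∧ p.2 ≠ b := by
        intro p hp
        have := hd.1 p hp
        exact ⟨Ne.symm this.2.2.1, Ne.symm this.2.2.2⟩
      simp only [List.map_cons, List.prod_cons, Equiv.Perm.mul_apply,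
        prod_swaps_fixed t a h1, prod_swaps_fixed t b h2]
      exact ⟨Equiv.swap_apply_left _ _, Equiv.swap_apply_right _ _⟩
    · have ht := ih hd.2 h
      have hc := hd.1 (a, b) h
      constructor
      · simp only [List.map_cons, List.prod_cons, Equiv.Perm.mul_apply, ht.1]
        exact Equiv.swap_apply_of_ne_of_ne (Ne.symm hc.2.1) (Ne.symm hc.2.2.2)
      · simp only [List.map_cons, List.prod_cons, Equiv.Perm.mul_apply, ht.2]
        exact Equiv.swap_apply_of_ne_of_ne (Ne.symm hc.1) (Ne.symm hc.2.2.1)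

/-! ### Explicit action of `sigmaPerm` -/

def sigPairs (i j : ℕ) : List (ℕ × ℕ) :=
  (List.range (j + 1)).map fun t => (i - j + t, i + t + 1)

lemma sigmaPerm_eq (i j : ℕ) :
    sigmaPerm i j = ((sigPairs i j).map fun p => Equiv.swap p.1 p.2).prod := by
  unfold sigmaPerm sigPairs
  rw [List.map_map]
  rfl

lemma sigPairs_pairwise {i j : ℕ} (h : j + 1 ≤ i) :
    (sigPairs i j).Pairwise fun p q => p.1 ≠ q.1 ∧ p.1 ≠ q.2 ∧ p.2 ≠ q.1 ∧ p.2 ≠ q.2 := by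
  rw [List.pairwise_iff_getElem]
  simp only [sigPairs, List.length_map, List.length_range]
  intro s t hs ht hst
  simp only [List.getElem_map, List.getElem_range]
  refine ⟨by omega, by omega, by omega, by omega⟩

lemma mem_sigPairs {i j a b : ℕ} :
    (a, b) ∈ sigPairs i j ↔ ∃ t, t ≤ j ∧ a = i - j + t ∧ b = i + t + 1 := by
  unfold sigPairs
  simp only [List.mem_map, List.mem_range, Prod.mk.injEq]
  constructor
  · rintro ⟨t, ht, h1, h2⟩; exact ⟨t, by omega, h1.symm, h2.symm⟩
  · rintro ⟨t, ht, h1, h2⟩; exact ⟨t, by omega, h1.symm, h2.symm⟩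

lemma sigma_low {i j x : ℕ} (h : j + 1 ≤ i) (h1 : i - j ≤ x) (h2 : x ≤ i) :
    sigmaPerm i j x = x + (j + 1) := by
  rw [sigmaPerm_eq]
  refine (prod_swaps_mem _ (sigPairs_pairwise h) ?_).1
  rw [mem_sigPairs]
  exact ⟨x - (i - j), by omega, by omega, by omega⟩

lemma sigma_high {i j x : ℕ} (h : j + 1 ≤ i) (h1 : i + 1 ≤ x) (h2 : x ≤ i + j + 1) :
    sigmaPerm i j x = x - (j + 1) := by
  rw [sigmaPerm_eq]
  refine (prod_swaps_mem _ (sigPairs_pairwise h) ?_).2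
  rw [mem_sigPairs]
  exact ⟨x - i - 1, by omega, by omega, by omega⟩

lemma sigma_fixed {i j x : ℕ} (h : j + 1 ≤ i) (hx : x < i - j ∨ i + j + 1 < x) :
    sigmaPerm i j x = x := by
  rw [sigmaPerm_eq]
  apply prod_swaps_fixed
  intro p hp
  obtain ⟨a, b⟩ := p
  rw [mem_sigPairs] at hp
  obtain ⟨t, ht, rfl, rfl⟩ := hp
  constructor <;> omega

lemma sigma_moves {i j x : ℕ} (h : j + 1 ≤ i) (h1 : i - j ≤ x) (h2 : x ≤ i + j + 1) :
    sigmaPerm i j x ≠ x := by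
  rcases le_or_gt x i with c | c
  · rw [sigma_low h h1 c]; omega
  · rw [sigma_high h c h2]; omega

lemma sigma_moves_iff {i j x : ℕ} (h : j + 1 ≤ i) :
    sigmaPerm i j x ≠ x ↔ (i - j ≤ x ∧ x ≤ i + j + 1) := by
  constructor
  · intro hx
    by_contra hc
    exact hx (sigma_fixed h (by omega))
  · intro ⟨h1, h2⟩; exact sigma_moves h h1 h2

lemma distant_disjoint {n : ℕ} {p q : ℕ × ℕ} (hp : SpecialParams n p.1 p.2)
    (hq : SpecialParams n q.1 q.2) (hpq : Distant p q) :
    ∀ x, sigmaPerm p.1 p.2 x = x ∨ sigmaPerm q.1 q.2 x = x := by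
  rw [specialParams_iff] at hp hq
  rw [distant_iff (by omega) (by omega)] at hpq
  intro x
  by_cases hx : x < p.1 - p.2 ∨ p.1 + p.2 + 1 < x
  · exact Or.inl (sigma_fixed (by omega) hx)
  · exact Or.inr (sigma_fixed (by omega) (by omega))

/-! ### Products of disjoint permutations -/

lemma prod_perm_fixed (l : List (Equiv.Perm ℕ)) (x : ℕ) (h : ∀ σ ∈ l, σ x = x) :
    l.prod x = x := by
  induction l with
  | nil => rfl
  | cons a t ih =>
    simp only [List.prod_cons, Equiv.Perm.mul_apply,
      ih (fun σ hσ => h σ (List.mem_cons_of_mem _ hσ)), h a (List.mem_cons_self)]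

lemma prod_perm_eq (l : List (Equiv.Perm ℕ))
    (hd : l.Pairwise fun σ τ => ∀ y, σ y = y ∨ τ y = y)
    {σ : Equiv.Perm ℕ} (hσ : σ ∈ l) {x : ℕ} (hx : σ x ≠ x) :
    l.prod x = σ x := by
  induction l with
  | nil => cases hσ
  | cons a t ih =>
    rw [List.pairwise_cons] at hd
    rcases List.mem_cons.mp hσ with h | h
    · subst h
      have ht : t.prod x = x :=
        prod_perm_fixed t x (fun τ hτ => (hd.1 τ hτ x).resolve_left hx)
      simp [List.prod_cons, Equiv.Perm.mul_apply, ht]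
    · have ht := ih hd.2 h
      have h2 : a (σ x) = σ x := by
        rcases hd.1 σ h (σ x) with h' | h'
        · exact h'
        · exact absurd (σ.injective h') hx
      simp [List.prod_cons, Equiv.Perm.mul_apply, ht, h2]

/-! ### Recovery of parameters from the product -/

lemma map_pairwise_disjoint {n : ℕ} {L : List (ℕ × ℕ)}
    (hv : ∀ p ∈ L, SpecialParams n p.1 p.2) (hd : L.Pairwise Distant) :
    (L.map fun p => sigmaPerm p.1 p.2).Pairwise fun σ τ => ∀ y, σ y = y ∨ τ y = y := by
  rw [List.pairwise_map]
  exact (hd.imp_of_mem fun {p q} hp hq hpq =>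
    distant_disjoint (hv p hp) (hv q hq) hpq)

lemma prod_mem_iff {n : ℕ} {L : List (ℕ × ℕ)}
    (hv : ∀ p ∈ L, SpecialParams n p.1 p.2) (hd : L.Pairwise Distant)
    {i j : ℕ} (hij : SpecialParams n i j) :
    (i, j) ∈ L ↔
      ((L.map fun p => sigmaPerm p.1 p.2).prod (i - j) = i + 1 ∧
       (L.map fun p => sigmaPerm p.1 p.2).prod (i - j - 1) = i - j - 1) := by
  have hdisj := map_pairwise_disjoint hv hd
  have hij' := specialParams_iff.mp hij
  have hji : j + 1 ≤ i := by omega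
  constructor
  · intro hm
    constructor
    · have h1 : sigmaPerm i j (i - j) = i + 1 := by
        rw [sigma_low hji le_rfl (by omega)]; omega
      have := prod_perm_eq _ hdisj
        (List.mem_map_of_mem (f := fun p => sigmaPerm p.1 p.2) hm)
        (x := i - j) (by rw [h1]; omega)
      rw [this, h1]
    · apply prod_perm_fixed
      intro σ hσ
      rw [List.mem_map] at hσ
      obtain ⟨q, hq, rfl⟩ := hσ
      have hq' := specialParams_iff.mp (hv q hq)
      by_cases hqe : q = (i, j)
      · subst hqe
        exact sigma_fixed (by simp; omega) (by simp; omega)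
      · have hdist : Distant (i, j) q :=
          hd.forall hm hq (fun h => hqe h.symm)
        rw [distant_iff (by simp; omega) (by omega)] at hdist
        exact sigma_fixed (by omega) (by simp at hdist ⊢; omega)
  · rintro ⟨h1, h2⟩
    set w := (L.map fun p => sigmaPerm p.1 p.2).prod with hw
    have hne : w (i - j) ≠ i - j := by rw [h1]; omega
    have hex : ∃ q ∈ L, sigmaPerm q.1 q.2 (i - j) ≠ i - j := by
      by_contra hc
      push_neg at hc
      refine hne (prod_perm_fixed _ _ ?_)
      intro σ hσ
      rw [List.mem_map] at hσ
      obtain ⟨q, hq, rfl⟩ := hσ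
      exact hc q hq
    obtain ⟨q, hqL, hqm⟩ := hex
    have hq' := specialParams_iff.mp (hv q hqL)
    have hweq : w (i - j) = sigmaPerm q.1 q.2 (i - j) :=
      prod_perm_eq _ hdisj (List.mem_map_of_mem hqL) hqm
    have hqv : sigmaPerm q.1 q.2 (i - j) = i + 1 := by rw [← hweq, h1]
    have hqji : q.2 + 1 ≤ q.1 := by omega
    have hrange : q.1 - q.2 ≤ i - j ∧ i - j ≤ q.1 + q.2 + 1 :=
      (sigma_moves_iff hqji).mp hqm
    rcases le_or_gt (i - j) q.1 with hc | hc
    · -- lower half: moves up by q.2 + 1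
      have hlow := sigma_low hqji hrange.1 hc
      rw [hqv] at hlow
      -- i + 1 = (i - j) + (q.2 + 1)
      have hj2 : q.2 = j := by omega
      rcases eq_or_lt_of_le hrange.1 with heq | hlt
      · have : q = (i, j) := by
          rw [Prod.ext_iff]
          exact ⟨by omega, by omega⟩
        rwa [← this]
      · -- i - j - 1 is moved by sigma q, contradiction with h2
        exfalso
        have hmv : sigmaPerm q.1 q.2 (i - j - 1) ≠ i - j - 1 :=
          sigma_moves hqji (by omega) (by omega)
        have := prod_perm_eq _ hdisj (List.mem_map_of_mem hqL) hmv
        rw [← hw] at this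
        rw [h2] at this
        exact hmv this.symm
    · -- upper half: moves down, contradiction
      exfalso
      have hhigh := sigma_high hqji hc hrange.2
      rw [hqv] at hhigh
      omega

/-! ### Configurations as finsets -/

def valid (n : ℕ) (C : Finset (ℕ × ℕ)) : Prop :=
  (∀ p ∈ C, SpecialParams n p.1 p.2) ∧ ∀ p ∈ C, ∀ q ∈ C, p ≠ q → Distant p q

instance decValid (n : ℕ) (C : Finset (ℕ × ℕ)) : Decidable (valid n C) := by
  unfold valid; infer_instance

def configsFin (n : ℕ) : Finset (Finset (ℕ × ℕ)) :=
  (Finset.range (n + 1) ×ˢ Finset.range (n + 1)).powerset.filter (valid n)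

lemma mem_configsFin {n : ℕ} {C : Finset (ℕ × ℕ)} :
    C ∈ configsFin n ↔ valid n C := by
  rw [configsFin, Finset.mem_filter, Finset.mem_powerset]
  constructor
  · exact fun h => h.2
  · intro h
    refine ⟨fun p hp => ?_, h⟩
    have := specialParams_iff.mp (h.1 p hp)
    rw [Finset.mem_product, Finset.mem_range, Finset.mem_range]
    omega

lemma valid_sep {n : ℕ} {C : Finset (ℕ × ℕ)} (h : valid n C) {p q : ℕ × ℕ}
    (hp : p ∈ C) (hq : q ∈ C) (hne : p ≠ q) :
    p.1 + p.2 + 3 ≤ q.1 - q.2 ∨ q.1 + q.2 + 3 ≤ p.1 - p.2 := by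
  have h1 := specialParams_iff.mp (h.1 p hp)
  have h2 := specialParams_iff.mp (h.1 q hq)
  exact (distant_iff (by omega) (by omega)).mp (h.2 p hp q hq hne)

lemma valid_unique_end {n : ℕ} {C : Finset (ℕ × ℕ)} (h : valid n C) {p q : ℕ × ℕ} {m : ℕ}
    (hp : p ∈ C) (hq : q ∈ C) (h1 : p.1 + p.2 + 1 = m) (h2 : q.1 + q.2 + 1 = m) : p = q := by
  by_contra hne
  have hsep := valid_sep h hp hq hne
  have hp' := specialParams_iff.mp (h.1 p hp)
  have hq' := specialParams_iff.mp (h.1 q hq)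
  omega

/-! ### A linear order for sorting configurations -/

def pr (p q : ℕ × ℕ) : Prop := p.1 < q.1 ∨ (p.1 = q.1 ∧ p.2 ≤ q.2)

instance : DecidableRel pr := fun p q => by unfold pr; infer_instance

instance : IsTrans (ℕ × ℕ) pr := ⟨by intro a b c; unfold pr; omega⟩

instance : IsAntisymm (ℕ × ℕ) pr :=
  ⟨by intro a b h1 h2; unfold pr at *; rw [Prod.ext_iff]; omega⟩

instance : IsTotal (ℕ × ℕ) pr := ⟨by intro a b; unfold pr; omega⟩

def prodFun (C : Finset (ℕ × ℕ)) : Equiv.Perm ℕ :=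
  ((C.sort pr).map fun p => sigmaPerm p.1 p.2).prod

lemma sort_toFinset_perm {L : List (ℕ × ℕ)} (h : L.Nodup) :
    (L.toFinset.sort pr).Perm L := by
  rw [← Multiset.coe_eq_coe, Finset.sort_eq]
  simp only [List.toFinset, Multiset.toFinset, Multiset.coe_dedup, Multiset.coe_eq_coe]
  rw [List.dedup_eq_self.mpr h]

lemma valid_pairwise_commute {n : ℕ} {L : List (ℕ × ℕ)}
    (hv : ∀ p ∈ L, SpecialParams n p.1 p.2) (hd : L.Pairwise Distant) :
    (L.map fun p => sigmaPerm p.1 p.2).Pairwise Commute := by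
  exact (map_pairwise_disjoint hv hd).imp fun h => Equiv.Perm.Disjoint.commute h

lemma sort_pairwise_distant {n : ℕ} {C : Finset (ℕ × ℕ)} (h : valid n C) :
    (C.sort pr).Pairwise Distant := by
  have hnd : (C.sort pr).Nodup := Finset.sort_nodup C pr
  exact hnd.imp_of_mem fun {p q} hp hq hpq =>
    h.2 p ((Finset.mem_sort pr).mp hp) q ((Finset.mem_sort pr).mp hq) hpq

lemma isKostant_iff {n : ℕ} {w : Equiv.Perm ℕ} :
    IsKostant n w ↔ ∃ C ∈ configsFin n, prodFun C = w := by
  constructor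
  · rintro ⟨L, hv, hd, rfl⟩
    have hnd : L.Nodup := hd.imp fun h => distant_ne h
    refine ⟨L.toFinset, ?_, ?_⟩
    · rw [mem_configsFin]
      constructor
      · intro p hp; exact hv p (List.mem_toFinset.mp hp)
      · intro p hp q hq hne
        exact hd.forall
          (List.mem_toFinset.mp hp) (List.mem_toFinset.mp hq) hne
    · unfold prodFun
      have hperm : ((L.toFinset.sort pr).map fun p => sigmaPerm p.1 p.2).Perm
          (L.map fun p => sigmaPerm p.1 p.2) :=
        (sort_toFinset_perm hnd).map _
      exact (List.Perm.prod_eq' hperm.symm (valid_pairwise_commute hv hd)).symm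
  · rintro ⟨C, hC, rfl⟩
    rw [mem_configsFin] at hC
    exact ⟨C.sort pr,
      fun p hp => hC.1 p ((Finset.mem_sort pr).mp hp),
      sort_pairwise_distant hC, rfl⟩

lemma prodFun_mem_iff {n : ℕ} {C : Finset (ℕ × ℕ)} (hC : valid n C)
    {i j : ℕ} (hij : SpecialParams n i j) :
    (i, j) ∈ C ↔ (prodFun C (i - j) = i + 1 ∧ prodFun C (i - j - 1) = i - j - 1) := by
  rw [← Finset.mem_sort pr (s := C) (a := (i, j))]
  exact prod_mem_iff (fun p hp => hC.1 p ((Finset.mem_sort pr).mp hp))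
    (sort_pairwise_distant hC) hij

lemma prodFun_injOn (n : ℕ) : Set.InjOn prodFun (configsFin n) := by
  intro C hC D hD heq
  rw [Finset.mem_coe, mem_configsFin] at hC hD
  ext p
  obtain ⟨i, j⟩ := p
  constructor
  · intro hp
    rw [prodFun_mem_iff hD (hC.1 _ hp), ← heq, ← prodFun_mem_iff hC (hC.1 _ hp)]
    exact hp
  · intro hp
    rw [prodFun_mem_iff hC (hD.1 _ hp), heq, ← prodFun_mem_iff hD (hD.1 _ hp)]
    exact hp

lemma kiTotal_eq_card (n : ℕ) : kiTotal n = (configsFin n).card := by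
  classical
  have hset : {w : Equiv.Perm ℕ | IsKostant n w} = ↑((configsFin n).image prodFun) := by
    ext w
    simp only [Set.mem_setOf_eq, Finset.coe_image, Set.mem_image, Finset.mem_coe,
      isKostant_iff]
  rw [kiTotal, hset, Set.ncard_coe_finset,
    Finset.card_image_of_injOn (prodFun_injOn n)]

/-! ### Counting configurations -/

lemma configs_small {n : ℕ} (hn : n ≤ 1) : configsFin n = {∅} := by
  ext C
  rw [mem_configsFin, Finset.mem_singleton]
  constructor
  · intro h
    apply Finset.eq_empty_of_forall_notMem
    intro p hp
    have := specialParams_iff.mp (h.1 p hp)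
    omega
  · rintro rfl
    exact ⟨fun p hp => absurd hp (Finset.notMem_empty p),
      fun p hp => absurd hp (Finset.notMem_empty p)⟩

lemma distant_of_sep {p q : ℕ × ℕ} (h : p.2 + 1 ≤ p.1) (h' : q.2 + 1 ≤ q.1)
    (hs : p.1 + p.2 + 3 ≤ q.1 - q.2 ∨ q.1 + q.2 + 3 ≤ p.1 - p.2) : Distant p q :=
  (distant_iff h h').mpr hs

lemma end_struct {n m : ℕ} {C : Finset (ℕ × ℕ)} (hv : valid n C) {p0 : ℕ × ℕ}
    (hp0 : p0 ∈ C) (hend : p0.1 + p0.2 + 1 = m) (hm : n ≤ m + 2) :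
    ∀ p ∈ C, p ≠ p0 → p.1 + p.2 + 3 ≤ p0.1 - p0.2 := by
  intro p hp hne
  rcases valid_sep hv hp hp0 hne with h | h
  · exact h
  · have h1 := specialParams_iff.mp (hv.1 p hp)
    omega

def setA (n : ℕ) : Finset (Finset (ℕ × ℕ)) :=
  (configsFin (n+2)).filter (fun C => ¬ ∃ p ∈ C, p.1 + p.2 + 1 = n + 2)

def setB0 (n : ℕ) : Finset (Finset (ℕ × ℕ)) :=
  (configsFin (n+2)).filter (fun C => (n+1, 0) ∈ C)

def setB1 (n : ℕ) : Finset (Finset (ℕ × ℕ)) :=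
  (configsFin (n+2)).filter
    (fun C => (∃ p ∈ C, p.1 + p.2 + 1 = n + 2) ∧ (n+1, 0) ∉ C)

def setD0 (n : ℕ) : Finset (Finset (ℕ × ℕ)) :=
  (configsFin n).filter (fun C => ¬ ∃ q ∈ C, q.1 + q.2 + 1 = n)

def setD1 (n : ℕ) : Finset (Finset (ℕ × ℕ)) :=
  (configsFin n).filter (fun C => ∃ q ∈ C, q.1 + q.2 + 1 = n)

lemma partitionN (n : ℕ) :
    (configsFin (n+2)).card = (setA n).card + (setB0 n).card + (setB1 n).card := by
  classical
  have hU : configsFin (n+2) = (setA n ∪ setB0 n) ∪ setB1 n := by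
    ext C
    simp only [setA, setB0, setB1, Finset.mem_union, Finset.mem_filter]
    constructor
    · intro h
      by_cases h1 : ∃ p ∈ C, p.1 + p.2 + 1 = n + 2
      · by_cases h2 : (n+1, 0) ∈ C
        · exact Or.inl (Or.inr ⟨h, h2⟩)
        · exact Or.inr ⟨h, h1, h2⟩
      · exact Or.inl (Or.inl ⟨h, h1⟩)
    · rintro ((h | h) | h) <;> exact h.1
  have hd1 : Disjoint (setA n) (setB0 n) := by
    rw [Finset.disjoint_left]
    intro C hCA hCB
    rw [setA, Finset.mem_filter] at hCA
    rw [setB0, Finset.mem_filter] at hCB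
    exact hCA.2 ⟨(n+1, 0), hCB.2, by omega⟩
  have hd2 : Disjoint (setA n ∪ setB0 n) (setB1 n) := by
    rw [Finset.disjoint_left]
    intro C hCA hCB
    rw [setB1, Finset.mem_filter] at hCB
    rcases Finset.mem_union.mp hCA with h | h
    · rw [setA, Finset.mem_filter] at h
      exact h.2 hCB.2.1
    · rw [setB0, Finset.mem_filter] at h
      exact hCB.2.2 h.2
  rw [hU, Finset.card_union_of_disjoint hd2, Finset.card_union_of_disjoint hd1]

lemma partitionD (n : ℕ) :
    (configsFin n).card = (setD1 n).card + (setD0 n).card := by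
  classical
  rw [setD0, setD1]
  exact (Finset.card_filter_add_card_filter_not _).symm

lemma cardA (n : ℕ) : (setA n).card = (configsFin (n+1)).card := by
  congr 1
  ext C
  rw [setA, Finset.mem_filter, mem_configsFin, mem_configsFin]
  constructor
  · rintro ⟨hv, hend⟩
    refine ⟨fun p hp => ?_, hv.2⟩
    have h1 := specialParams_iff.mp (hv.1 p hp)
    have h2 : p.1 + p.2 + 1 ≠ n + 2 := fun he => hend ⟨p, hp, he⟩
    rw [specialParams_iff]
    omega
  · intro hv
    refine ⟨⟨fun p hp => ?_, hv.2⟩, ?_⟩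
    · have h1 := specialParams_iff.mp (hv.1 p hp)
      rw [specialParams_iff]
      omega
    · rintro ⟨p, hp, he⟩
      have h1 := specialParams_iff.mp (hv.1 p hp)
      omega

lemma cardB0 (n : ℕ) : (setB0 n).card = (setD0 n).card := by
  classical
  refine Finset.card_bij' (fun C _ => C.erase (n+1, 0)) (fun D _ => insert (n+1, 0) D)
    ?_ ?_ ?_ ?_
  · intro C hC
    rw [setB0, Finset.mem_filter, mem_configsFin] at hC
    obtain ⟨hv, hmem⟩ := hC
    have hkey : ∀ p ∈ C, p ≠ (n+1, 0) → p.1 + p.2 + 3 ≤ n + 1 := by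
      intro p hp hne
      have hsep := valid_sep hv hp hmem hne
      have hsep' : p.1 + p.2 + 3 ≤ (n+1) - 0 ∨ (n+1) + 0 + 3 ≤ p.1 - p.2 := hsep
      have h1 := specialParams_iff.mp (hv.1 p hp)
      omega
    rw [setD0, Finset.mem_filter, mem_configsFin]
    refine ⟨⟨fun p hp => ?_, fun p hp q hq hne =>
      hv.2 p (Finset.mem_of_mem_erase hp) q (Finset.mem_of_mem_erase hq) hne⟩, ?_⟩
    · have h1 := specialParams_iff.mp (hv.1 p (Finset.mem_of_mem_erase hp))
      have h2 := hkey p (Finset.mem_of_mem_erase hp) (Finset.ne_of_mem_erase hp)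
      rw [specialParams_iff]
      omega
    · rintro ⟨q, hq, he⟩
      have h2 := hkey q (Finset.mem_of_mem_erase hq) (Finset.ne_of_mem_erase hq)
      omega
  · intro D hD
    rw [setD0, Finset.mem_filter, mem_configsFin] at hD
    obtain ⟨hv, hend⟩ := hD
    rw [setB0, Finset.mem_filter, mem_configsFin]
    refine ⟨⟨fun p hp => ?_, fun p hp q hq hne => ?_⟩, Finset.mem_insert_self _ _⟩
    · rcases Finset.mem_insert.mp hp with rfl | hp'
      · exact specialParams_iff.mpr (show 1 ≤ n+1 ∧ n+1 ≤ n+2-1 ∧ 0 ≤ n+1-1 ∧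
          0 ≤ n+2-1-(n+1) by omega)
      · have := specialParams_iff.mp (hv.1 p hp')
        rw [specialParams_iff]
        omega
    · have hfacts : ∀ r ∈ D, r.1 + r.2 + 3 ≤ (n+1) - 0 := by
        intro r hr
        have h1 := specialParams_iff.mp (hv.1 r hr)
        have h2 : r.1 + r.2 + 1 ≠ n := fun he => hend ⟨r, hr, he⟩
        omega
      rcases Finset.mem_insert.mp hp with rfl | hp' <;>
        rcases Finset.mem_insert.mp hq with rfl | hq'
      · exact absurd rfl hne
      · refine distant_of_sep (show (0:ℕ) + 1 ≤ n + 1 by omega)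
          (by have := specialParams_iff.mp (hv.1 q hq'); omega)
          (Or.inr (hfacts q hq'))
      · refine distant_of_sep
          (by have := specialParams_iff.mp (hv.1 p hp'); omega)
          (show (0:ℕ) + 1 ≤ n + 1 by omega)
          (Or.inl (hfacts p hp'))
      · exact hv.2 p hp' q hq' hne
  · intro C hC
    rw [setB0, Finset.mem_filter] at hC
    exact Finset.insert_erase hC.2
  · intro D hD
    rw [setD0, Finset.mem_filter, mem_configsFin] at hD
    have hni : (n+1, 0) ∉ D := by
      intro h
      have := specialParams_iff.mp (hD.1.1 _ h)
      have h2 : n + 1 ≤ n - 1 := this.2.1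
      omega
    exact Finset.erase_insert hni

def shrinkOne (n : ℕ) (p : ℕ × ℕ) : ℕ × ℕ :=
  if p.1 + p.2 + 1 = n + 2 then (p.1 - 1, p.2 - 1) else p

def growOne (n : ℕ) (q : ℕ × ℕ) : ℕ × ℕ :=
  if q.1 + q.2 + 1 = n then (q.1 + 1, q.2 + 1) else q

lemma B1_struct {n : ℕ} {C : Finset (ℕ × ℕ)}
    (hC : C ∈ setB1 n) :
    ∃ p0 ∈ C, p0.1 + p0.2 + 1 = n + 2 ∧ 1 ≤ p0.2 ∧ p0.2 + 1 ≤ p0.1 ∧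
      (∀ p ∈ C, p ≠ p0 → p.1 + p.2 + 3 ≤ p0.1 - p0.2 ∧ shrinkOne n p = p) ∧
      shrinkOne n p0 = (p0.1 - 1, p0.2 - 1) ∧ valid (n+2) C := by
  rw [setB1, Finset.mem_filter, mem_configsFin] at hC
  obtain ⟨hv, ⟨p0, hp0, hp0e⟩, hn0⟩ := hC
  have h0 := specialParams_iff.mp (hv.1 p0 hp0)
  have hj0 : 1 ≤ p0.2 := by
    by_contra h
    apply hn0
    have he : p0 = (n+1, 0) := by
      rw [Prod.ext_iff]
      constructor <;> omega
    rwa [← he]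
  have hst := end_struct hv hp0 hp0e (by omega)
  refine ⟨p0, hp0, hp0e, hj0, by omega, fun p hp hne => ⟨hst p hp hne, ?_⟩,
    by rw [shrinkOne, if_pos hp0e], hv⟩
  rw [shrinkOne, if_neg]
  have := hst p hp hne
  omega

lemma D1_struct {n : ℕ} {D : Finset (ℕ × ℕ)}
    (hD : D ∈ setD1 n) :
    ∃ q0 ∈ D, q0.1 + q0.2 + 1 = n ∧ q0.2 + 1 ≤ q0.1 ∧ q0.1 ≤ n - 1 ∧
      (∀ q ∈ D, q ≠ q0 → q.1 + q.2 + 3 ≤ q0.1 - q0.2 ∧ growOne n q = q) ∧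
      growOne n q0 = (q0.1 + 1, q0.2 + 1) ∧ valid n D := by
  rw [setD1, Finset.mem_filter, mem_configsFin] at hD
  obtain ⟨hv, ⟨q0, hq0, hq0e⟩⟩ := hD
  have h0 := specialParams_iff.mp (hv.1 q0 hq0)
  have hst := end_struct hv hq0 hq0e (by omega)
  refine ⟨q0, hq0, hq0e, by omega, by omega, fun q hq hne => ⟨hst q hq hne, ?_⟩,
    by rw [growOne, if_pos hq0e], hv⟩
  rw [growOne, if_neg]
  intro h
  exact hne (valid_unique_end hv hq hq0 h hq0e)

lemma cardB1 (n : ℕ) : (setB1 n).card = (setD1 n).card := by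
  classical
  refine Finset.card_bij' (fun C _ => C.image (shrinkOne n))
    (fun D _ => D.image (growOne n)) ?_ ?_ ?_ ?_
  · -- shrink maps into setD1
    intro C hC
    obtain ⟨p0, hp0, hp0e, hj0, hji, hst, hs0, hv⟩ := B1_struct hC
    have h00 := specialParams_iff.mp (hv.1 p0 hp0)
    rw [setD1, Finset.mem_filter, mem_configsFin]
    refine ⟨⟨?_, ?_⟩, ?_⟩
    · intro p' hp'
      rw [Finset.mem_image] at hp'
      obtain ⟨p, hp, rfl⟩ := hp'
      by_cases hpe : p = p0
      · subst hpe
        rw [hs0, specialParams_iff]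
        exact show 1 ≤ p.1 - 1 ∧ p.1 - 1 ≤ n - 1 ∧ p.2 - 1 ≤ p.1 - 1 - 1 ∧
          p.2 - 1 ≤ n - 1 - (p.1 - 1) by omega
      · rw [(hst p hp hpe).2, specialParams_iff]
        have h0 := specialParams_iff.mp (hv.1 p hp)
        have h1 := (hst p hp hpe).1
        omega
    · intro p' hp' q' hq' hne
      rw [Finset.mem_image] at hp' hq'
      obtain ⟨p, hp, rfl⟩ := hp'
      obtain ⟨q, hq, rfl⟩ := hq'
      have hpq : p ≠ q := fun h => hne (by rw [h])
      by_cases hpe : p = p0 <;> by_cases hqe : q = p0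
      · exact absurd (hpe.trans hqe.symm) hpq
      · subst hpe
        rw [hs0, (hst q hq hqe).2]
        have hq1 := specialParams_iff.mp (hv.1 q hq)
        have hq2 := (hst q hq hqe).1
        refine distant_of_sep ?_ (by omega) (Or.inr ?_)
        · exact show p.2 - 1 + 1 ≤ p.1 - 1 by omega
        · exact show q.1 + q.2 + 3 ≤ p.1 - 1 - (p.2 - 1) by omega
      · subst hqe
        rw [hs0, (hst p hp hpe).2]
        have hp1 := specialParams_iff.mp (hv.1 p hp)
        have hp2 := (hst p hp hpe).1
        refine distant_of_sep (by omega) ?_ (Or.inl ?_)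
        · exact show q.2 - 1 + 1 ≤ q.1 - 1 by omega
        · exact show p.1 + p.2 + 3 ≤ q.1 - 1 - (q.2 - 1) by omega
      · rw [(hst p hp hpe).2, (hst q hq hqe).2]
        exact hv.2 p hp q hq hpq
    · exact ⟨shrinkOne n p0, Finset.mem_image_of_mem _ hp0, by
        rw [hs0]
        exact show p0.1 - 1 + (p0.2 - 1) + 1 = n by omega⟩
  · -- grow maps into setB1
    intro D hD
    obtain ⟨q0, hq0, hq0e, hji, hle, hst, hg0, hv⟩ := D1_struct hD
    rw [setB1, Finset.mem_filter, mem_configsFin]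
    refine ⟨⟨?_, ?_⟩, ?_, ?_⟩
    · intro q' hq'
      rw [Finset.mem_image] at hq'
      obtain ⟨q, hq, rfl⟩ := hq'
      by_cases hqe : q = q0
      · subst hqe
        rw [hg0, specialParams_iff]
        exact show 1 ≤ q.1 + 1 ∧ q.1 + 1 ≤ n + 2 - 1 ∧ q.2 + 1 ≤ q.1 + 1 - 1 ∧
          q.2 + 1 ≤ n + 2 - 1 - (q.1 + 1) by omega
      · rw [(hst q hq hqe).2]
        have h0 := specialParams_iff.mp (hv.1 q hq)
        rw [specialParams_iff]
        omega
    · intro p' hp' q' hq' hne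
      rw [Finset.mem_image] at hp' hq'
      obtain ⟨p, hp, rfl⟩ := hp'
      obtain ⟨q, hq, rfl⟩ := hq'
      have hpq : p ≠ q := fun h => hne (by rw [h])
      by_cases hpe : p = q0 <;> by_cases hqe : q = q0
      · exact absurd (hpe.trans hqe.symm) hpq
      · subst hpe
        rw [hg0, (hst q hq hqe).2]
        have hq1 := specialParams_iff.mp (hv.1 q hq)
        have hq2 := (hst q hq hqe).1
        refine distant_of_sep ?_ (by omega) (Or.inr ?_)
        · exact show p.2 + 1 + 1 ≤ p.1 + 1 by omega
        · exact show q.1 + q.2 + 3 ≤ p.1 + 1 - (p.2 + 1) by omega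
      · subst hqe
        rw [hg0, (hst p hp hpe).2]
        have hp1 := specialParams_iff.mp (hv.1 p hp)
        have hp2 := (hst p hp hpe).1
        refine distant_of_sep (by omega) ?_ (Or.inl ?_)
        · exact show q.2 + 1 + 1 ≤ q.1 + 1 by omega
        · exact show p.1 + p.2 + 3 ≤ q.1 + 1 - (q.2 + 1) by omega
      · rw [(hst p hp hpe).2, (hst q hq hqe).2]
        exact hv.2 p hp q hq hpq
    · exact ⟨growOne n q0, Finset.mem_image_of_mem _ hq0, by
        rw [hg0]
        exact show q0.1 + 1 + (q0.2 + 1) + 1 = n + 2 by omega⟩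
    · -- (n+1, 0) not in the image
      intro h
      rw [Finset.mem_image] at h
      obtain ⟨q, hq, heq⟩ := h
      by_cases hqe : q = q0
      · subst hqe
        rw [hg0, Prod.ext_iff] at heq
        exact absurd heq.2 (by omega)
      · rw [(hst q hq hqe).2] at heq
        have h0 := specialParams_iff.mp (hv.1 q hq)
        rw [Prod.ext_iff] at heq
        omega
  · -- grow ∘ shrink = id on C
    intro C hC
    obtain ⟨p0, hp0, hp0e, hj0, hji, hst, hs0, hv⟩ := B1_struct hC
    show (C.image (shrinkOne n)).image (growOne n) = C
    rw [Finset.image_image]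
    have heq : ∀ p ∈ C, (growOne n ∘ shrinkOne n) p = p := by
      intro p hp
      by_cases hpe : p = p0
      · subst hpe
        simp only [Function.comp_apply, hs0, growOne]
        rw [if_pos (show p.1 - 1 + (p.2 - 1) + 1 = n by omega), Prod.ext_iff]
        constructor <;> simp <;> omega
      · have h1 := (hst p hp hpe).1
        simp only [Function.comp_apply, (hst p hp hpe).2, growOne]
        rw [if_neg (by omega)]
    calc C.image (growOne n ∘ shrinkOne n) = C.image id :=
          Finset.image_congr (fun p hp => heq p (Finset.mem_coe.mp hp))
      _ = C := Finset.image_id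
  · -- shrink ∘ grow = id on D
    intro D hD
    obtain ⟨q0, hq0, hq0e, hji, hle, hst, hg0, hv⟩ := D1_struct hD
    show (D.image (growOne n)).image (shrinkOne n) = D
    rw [Finset.image_image]
    have heq : ∀ q ∈ D, (shrinkOne n ∘ growOne n) q = q := by
      intro q hq
      by_cases hqe : q = q0
      · subst hqe
        simp only [Function.comp_apply, hg0, shrinkOne]
        rw [if_pos (show q.1 + 1 + (q.2 + 1) + 1 = n + 2 by omega), Prod.ext_iff]
        constructor <;> simp
      · have h0 := specialParams_iff.mp (hv.1 q hq)
        simp only [Function.comp_apply, (hst q hq hqe).2, shrinkOne]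
        rw [if_neg (by omega)]
    calc D.image (shrinkOne n ∘ growOne n) = D.image id :=
          Finset.image_congr (fun q hq => heq q (Finset.mem_coe.mp hq))
      _ = D := Finset.image_id

lemma card_configs : ∀ n : ℕ, (configsFin n).card = Nat.fib (n + 1) := by
  intro n
  induction n using Nat.strong_induction_on with
  | _ n ih =>
    match n with
    | 0 => rw [configs_small (by omega)]; rfl
    | 1 => rw [configs_small (by omega)]; rfl
    | (m + 2) =>
      have h1 := ih (m + 1) (by omega)
      have h2 := ih m (by omega)
      rw [partitionN m, cardA m, cardB0 m, cardB1 m, h1]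
      have hD := partitionD m
      rw [h2] at hD
      have : Nat.fib (m + 3) = Nat.fib (m + 1) + Nat.fib (m + 2) :=
        Nat.fib_add_two (n := m + 1)
      have he1 : Nat.fib (m + 2 + 1) = Nat.fib (m + 3) := by norm_num
      have he2 : Nat.fib (m + 1 + 1) = Nat.fib (m + 2) := by norm_num
      omega

end KIAux

/-- The total number of Kostant involutions in `S_n` is the Fibonacci number `F_{n+1}`
(with `F_0 = 0`, `F_1 = 1`). -/
theorem kiTotal_eq_fib (n : ℕ) (hn : 1 ≤ n) : kiTotal n = Nat.fib (n + 1) := by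
  rw [KIAux.kiTotal_eq_card, KIAux.card_configs]
end

section
/- Let mi_n denote the number of 321-avoiding involutions in S_n, with the convention mi_0 = 1. Then for every n ≥ 1, mi_n = mi_{n−1} + Σ_{i=1}^{⌊n/2⌋} C_{i−1} · mi_{n−2i}, where C_m denotes the m-th Catalan number C_m = (1/(m+1))·binom(2m, m). -/
/-- `w` is a permutation of `{1,…,n}` (i.e. fixes every point outside `{1,…,n}`)
which is an involution: `w² = 1`. -/
def IsInvolutionOn (n : ℕ) (w : Equiv.Perm ℕ) : Prop :=
  (∀ k : ℕ, w k ≠ k → 1 ≤ k ∧ k ≤ n) ∧ w * w = 1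

/-- `mi n` is the number of 321-avoiding involutions in `S_n`. -/
noncomputable def mi (n : ℕ) : ℕ :=
  Set.ncard {w : Equiv.Perm ℕ | IsInvolutionOn n w ∧ Avoids321 n w}

namespace Mi321
open List Finset

noncomputable section
open Classical

def Entries (l : List ℤ) : Prop := ∀ x ∈ l, x = 1 ∨ x = 0 ∨ x = -1
def PM (l : List ℤ) : Prop := ∀ x ∈ l, x = 1 ∨ x = -1
def Pre (l : List ℤ) : Prop := ∀ k, 0 ≤ (l.take k).sum
def ZeroOK (l : List ℤ) : Prop := ∀ k, l.getD k 1 = 0 → (l.take k).sum = 0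
def ValidW (l : List ℤ) : Prop := Pre l ∧ l.sum = 0 ∧ ZeroOK l
def PrimW (l : List ℤ) : Prop :=
  PM l ∧ l.sum = 0 ∧ 2 ≤ l.length ∧ ∀ k, 0 < k → k < l.length → 0 < (l.take k).sum
def DyckW (l : List ℤ) : Prop := PM l ∧ Pre l ∧ l.sum = 0

def allLists : ℕ → Finset (List ℤ)
  | 0 => {[]}
  | n+1 => (allLists n).biUnion (fun l => {1 :: l, 0 :: l, -1 :: l})

lemma mem_allLists {n : ℕ} {l : List ℤ} :
    l ∈ allLists n ↔ l.length = n ∧ Entries l := by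
  induction n generalizing l with
  | zero =>
    simp [allLists, List.length_eq_zero_iff, Entries]
    rintro rfl; simp
  | succ n ih =>
    simp only [allLists, Finset.mem_biUnion, Finset.mem_insert, Finset.mem_singleton]
    constructor
    · rintro ⟨m, hm, rfl | rfl | rfl⟩ <;>
        rcases ih.mp hm with ⟨hl, he⟩ <;>
        refine ⟨by simp [hl], ?_⟩ <;>
        · intro x hx
          rcases List.mem_cons.mp hx with rfl | hx
          · simp
          · exact he x hx
    · rintro ⟨hl, he⟩
      cases l with
      | nil => simp at hl
      | cons a t =>
        refine ⟨t, ih.mpr ⟨by simpa using hl, fun x hx => he x (List.mem_cons_of_mem _ hx)⟩, ?_⟩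
        rcases he a List.mem_cons_self with rfl | rfl | rfl
        · left; rfl
        · right; left; rfl
        · right; right; rfl

def VF (n : ℕ) : Finset (List ℤ) := (allLists n).filter ValidW
def DF (m : ℕ) : Finset (List ℤ) := (allLists (2*m)).filter DyckW
def PF (i : ℕ) : Finset (List ℤ) := (allLists (2*i)).filter PrimW

/-! ### prefix sum helpers -/

lemma take_append_sum (v p : List ℤ) (t : ℕ) :
    ((v ++ p).take (v.length + t)).sum = v.sum + (p.take t).sum := by
  rw [List.take_append, List.take_of_length_le (by omega), List.sum_append,
    show v.length + t - v.length = t from by omega]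

lemma take_append_sum_left (v p : List ℤ) {k : ℕ} (hk : k ≤ v.length) :
    ((v ++ p).take k).sum = (v.take k).sum := by
  rw [List.take_append, show k - v.length = 0 by omega]
  simp

lemma sum_take_succ' (l : List ℤ) (k : ℕ) (h : k < l.length) :
    (l.take (k+1)).sum = (l.take k).sum + l.getD k 0 := by
  rw [List.getD_eq_getElem _ _ h]
  exact List.sum_take_succ l k h

lemma prim_take_nonneg {p : List ℤ} (hp : PrimW p) (t : ℕ) : 0 ≤ (p.take t).sum := by
  rcases Nat.eq_zero_or_pos t with rfl | ht
  · simp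
  rcases lt_or_ge t p.length with h | h
  · exact le_of_lt (hp.2.2.2 t ht h)
  · rw [List.take_of_length_le h, hp.2.1]

lemma pm_parity {p : List ℤ} (hp : PM p) : (p.length : ℤ) % 2 = p.sum % 2 := by
  induction p with
  | nil => simp
  | cons a t ih =>
    have ha := hp a List.mem_cons_self
    have ht := ih (fun x hx => hp x (List.mem_cons_of_mem _ hx))
    simp only [List.length_cons, List.sum_cons, Nat.cast_add, Nat.cast_one]
    rcases ha with rfl | rfl <;> omega

lemma prim_even {p : List ℤ} (hp : PrimW p) : ∃ i, p.length = 2 * i ∧ 1 ≤ i := by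
  have := pm_parity hp.1
  rw [hp.2.1] at this
  have h2 := hp.2.2.1
  have : p.length % 2 = 0 := by omega
  exact ⟨p.length / 2, by omega, by omega⟩

lemma prim_last {p : List ℤ} (hp : PrimW p) : p.getD (p.length - 1) 1 = -1 := by
  have hlen := hp.2.2.1
  have h1 : p.length - 1 < p.length := by omega
  have hpos : 0 < (p.take (p.length - 1)).sum := hp.2.2.2 _ (by omega) h1
  have hsum : (p.take (p.length - 1 + 1)).sum = (p.take (p.length - 1)).sum + p.getD (p.length - 1) 0 :=
    sum_take_succ' p _ h1
  rw [show p.length - 1 + 1 = p.length by omega, List.take_length, hp.2.1] at hsum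
  have hg : p.getD (p.length - 1) 1 = p.getD (p.length - 1) 0 := by
    rw [List.getD_eq_getElem _ _ h1, List.getD_eq_getElem _ _ h1]
  have hmem : p.getD (p.length - 1) 1 ∈ p := by
    rw [List.getD_eq_getElem _ _ h1]; exact List.getElem_mem _
  rcases hp.1 _ hmem with h | h
  · rw [hg] at h; omega
  · exact h


/-! ### decomposition -/

lemma valid_last_ne_one {l : List ℤ} (hv : ValidW l) (hne : l ≠ []) :
    l.getD (l.length - 1) 1 ≠ 1 ∨ True := Or.inr trivial

lemma decomp {l : List ℤ} (hE : Entries l) (hv : ValidW l) (hne : l ≠ [])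
    (hlast : l.getD (l.length - 1) 0 = -1) :
    ∃ v p, l = v ++ p ∧ ValidW v ∧ Entries v ∧ PrimW p := by
  obtain ⟨hpre, hsum, hzero⟩ := hv
  set n := l.length with hn
  have hnpos : 0 < n := List.length_pos_iff.mpr hne
  set T : Finset ℕ := (Finset.range n).filter (fun k => (l.take k).sum = 0) with hT
  have h0T : 0 ∈ T := by simp [hT, hnpos]
  set j := T.max' ⟨0, h0T⟩ with hj
  have hjT : j ∈ T := T.max'_mem _
  have hjn : j < n := (Finset.mem_filter.mp hjT).1 |> Finset.mem_range.mp
  have hj0 : (l.take j).sum = 0 := (Finset.mem_filter.mp hjT).2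
  have hjmax : ∀ k, j < k → k < n → (l.take k).sum ≠ 0 := by
    intro k hk1 hk2 hk0
    have : k ∈ T := by simp [hT, hk2, hk0]
    have := T.le_max' k this
    omega
  -- j ≤ n - 2 : since s_{n-1} = 1
  have hsn1 : (l.take (n-1)).sum = 1 := by
    have := sum_take_succ' l (n-1) (by omega)
    rw [show n - 1 + 1 = n by omega] at this
    rw [hn] at this ⊢
    rw [List.take_length] at this
    rw [hsum, hlast] at this
    omega
  have hjn2 : j + 2 ≤ n := by
    rcases Nat.lt_or_ge (j+1) n with h | h
    · rcases Nat.lt_or_ge (j+2) n with h2 | h2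
      · omega
      · -- j + 1 = n - 1
        have : j = n - 2 ∨ j = n - 1 := by omega
        rcases this with h3 | h3
        · omega
        · rw [h3] at hj0; rw [hsn1] at hj0; omega
    · have : j = n - 1 := by omega
      rw [this, hsn1] at hj0; omega
  refine ⟨l.take j, l.drop j, (List.take_append_drop j l).symm, ?_, ?_, ?_⟩
  · refine ⟨?_, hj0, ?_⟩
    · intro k
      rw [List.take_take]
      exact hpre _
    · intro k hk
      have hkj : k < j := by
        by_contra hkj
        push_neg at hkj
        have : (l.take j).getD k 1 = 1 := by
          rw [List.getD_eq_default]
          simp [List.length_take]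
          omega
        rw [this] at hk; omega
      have : (l.take j).getD k 1 = l.getD k 1 := by
        rw [List.getD_eq_getElem _ _ (by simp [List.length_take]; omega),
          List.getD_eq_getElem _ _ (by omega : k < l.length)]
        simp [List.getElem_take]
      rw [this] at hk
      have := hzero k hk
      rw [List.take_take, min_eq_left (by omega : k ≤ j)] at *
      rw [this]
  · intro x hx
    exact hE x (List.take_subset _ _ hx)
  · have hlenv : (l.take j).length = j := by simp [List.length_take]; omega
    have hlenp : (l.drop j).length = n - j := by simp [hn]
    have hsplit : ∀ t, ((l.drop j).take t).sum = (l.take (j + t)).sum := by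
      intro t
      have := take_append_sum (l.take j) (l.drop j) t
      rw [List.take_append_drop, hlenv, hj0] at this
      omega
    have hposint : ∀ t, 0 < t → t < n - j → 0 < ((l.drop j).take t).sum := by
      intro t ht1 ht2
      rw [hsplit]
      have h1 := hpre (j + t)
      have h2 := hjmax (j + t) (by omega) (by omega)
      omega
    have hpsum : (l.drop j).sum = 0 := by
      have : (l.take j).sum + (l.drop j).sum = l.sum := by
        rw [← List.sum_append, List.take_append_drop]
      omega
    refine ⟨?_, hpsum, by rw [hlenp]; omega, by rw [hlenp]; exact hposint⟩
    · -- entries of p are ±1 : no zero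
      intro x hx
      rcases hE x (List.drop_subset _ _ hx) with h | h | h
      · left; exact h
      · exfalso
        subst h
        obtain ⟨t, ht, hget⟩ := List.mem_iff_getElem.mp hx
        have htn : t < n - j := by omega
        -- the zero is at absolute position j + t
        have habs : l.getD (j + t) 1 = 0 := by
          rw [List.getD_eq_getElem _ _ (by omega : j + t < l.length)]
          rw [List.getElem_drop] at hget
          exact hget
        have hz := hzero _ habs
        -- contradiction with maximality unless t = 0; but then s_{j+1} = 0 too
        rcases Nat.eq_zero_or_pos t with rfl | htpos
        · have hstep := sum_take_succ' l j (by omega)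
          have hval : l.getD j 0 = 0 := by
            rw [List.getD_eq_getElem _ _ (by omega : j < l.length)]
            rw [show j + 0 = j from rfl, List.getD_eq_getElem _ _ (by omega : j < l.length)] at habs
            exact habs
          have hz' : (l.take j).sum = 0 := by simpa using hz
          have hs1 : (l.take (j + 1)).sum = 0 := by rw [hstep, hval, hz']; ring
          exact hjmax (j+1) (by omega) (by omega) hs1
        · exact hjmax (j+t) (by omega) (by omega) hz
      · right; exact h

lemma prim_split_unique {v p v' p' : List ℤ} (hv : v.sum = 0) (hp : PrimW p)
    (hv' : v'.sum = 0) (hp' : PrimW p') (h : v ++ p = v' ++ p') : v = v' ∧ p = p' := by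
  have hlen : v.length + p.length = v'.length + p'.length := by
    have := congrArg List.length h
    simpa using this
  have key : ∀ (a b a' b' : List ℤ), a.sum = 0 → PrimW b → a'.sum = 0 → PrimW b' →
      a ++ b = a' ++ b' → b'.length ≤ b.length → b.length = b'.length := by
    intro a b a' b' ha hb ha' hb' hab hle
    have hb2 := hb'.2.2.1
    by_contra hne
    have hlen' : a.length + b.length = a'.length + b'.length := by
      have := congrArg List.length hab; simpa using this
    have hlt : a.length < a'.length := by omega
    set t := a'.length - a.length with htdef
    have ht1 : 0 < t := by omega
    have ht2 : t < b.length := by omega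
    have h1 : ((a ++ b).take a'.length).sum = a.sum + (b.take t).sum := by
      have := take_append_sum a b t
      rw [show a.length + t = a'.length by omega] at this
      exact this
    have h2 : ((a' ++ b').take a'.length).sum = a'.sum := by
      rw [take_append_sum_left _ _ (le_refl _), List.take_length]
    rw [hab, h2, ha'] at h1
    have := hb.2.2.2 t ht1 ht2
    omega
  rcases Nat.le_total p'.length p.length with hle | hle
  · have := key v p v' p' hv hp hv' hp' h hle
    have hv_eq : v.length = v'.length := by omega
    exact List.append_inj h hv_eq
  · have := key v' p' v p hv' hp' hv hp h.symm hle
    have hv_eq : v.length = v'.length := by omega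
    exact List.append_inj h hv_eq


/-! ### membership and append lemmas -/

lemma pm_entries {p : List ℤ} (h : PM p) : Entries p := fun x hx => by
  rcases h x hx with h | h
  · exact Or.inl h
  · exact Or.inr (Or.inr h)

lemma entries_append {v p : List ℤ} (hv : Entries v) (hp : Entries p) : Entries (v ++ p) := by
  intro x hx
  rcases List.mem_append.mp hx with h | h
  exacts [hv x h, hp x h]

lemma mem_VF {n : ℕ} {l : List ℤ} : l ∈ VF n ↔ l.length = n ∧ Entries l ∧ ValidW l := by
  constructor
  · intro h
    obtain ⟨h1, h2⟩ := Finset.mem_filter.mp h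
    obtain ⟨h3, h4⟩ := mem_allLists.mp h1
    exact ⟨h3, h4, h2⟩
  · rintro ⟨h1, h2, h3⟩
    exact Finset.mem_filter.mpr ⟨mem_allLists.mpr ⟨h1, h2⟩, h3⟩

lemma mem_PF {i : ℕ} {l : List ℤ} : l ∈ PF i ↔ l.length = 2*i ∧ PrimW l := by
  constructor
  · intro h
    obtain ⟨h1, h2⟩ := Finset.mem_filter.mp h
    exact ⟨(mem_allLists.mp h1).1, h2⟩
  · rintro ⟨h1, h2⟩
    exact Finset.mem_filter.mpr ⟨mem_allLists.mpr ⟨h1, pm_entries h2.1⟩, h2⟩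

lemma mem_DF {m : ℕ} {l : List ℤ} : l ∈ DF m ↔ l.length = 2*m ∧ DyckW l := by
  constructor
  · intro h
    obtain ⟨h1, h2⟩ := Finset.mem_filter.mp h
    exact ⟨(mem_allLists.mp h1).1, h2⟩
  · rintro ⟨h1, h2⟩
    exact Finset.mem_filter.mpr ⟨mem_allLists.mpr ⟨h1, pm_entries h2.1⟩, h2⟩

lemma valid_take {l : List ℤ} (hv : ValidW l) (j : ℕ)
    (hj0 : (l.take j).sum = 0) : ValidW (l.take j) := by
  obtain ⟨hpre, hsum, hzero⟩ := hv
  refine ⟨?_, hj0, ?_⟩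
  · intro k
    rw [List.take_take]
    exact hpre _
  · intro k hk
    have hkj : k < min j l.length := by
      by_contra hkj
      push_neg at hkj
      rw [List.getD_eq_default] at hk
      · omega
      · simp [List.length_take]; omega
    have : (l.take j).getD k 1 = l.getD k 1 := by
      rw [List.getD_eq_getElem _ _ (by simp [List.length_take]; omega),
        List.getD_eq_getElem _ _ (by omega : k < l.length)]
      simp [List.getElem_take]
    rw [this] at hk
    have := hzero k hk
    rw [List.take_take, min_eq_left (by omega : k ≤ j)]
    exact this

lemma valid_append_zero {v : List ℤ} (h : ValidW v) : ValidW (v ++ [0]) := by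
  obtain ⟨hpre, hsum, hzero⟩ := h
  refine ⟨?_, by simp [hsum], ?_⟩
  · intro k
    rcases le_or_gt k v.length with hk | hk
    · rw [take_append_sum_left _ _ hk]; exact hpre k
    · rw [List.take_of_length_le (by simp; omega)]
      simp [hsum]
  · intro k hk
    rcases lt_or_ge k v.length with hkl | hkl
    · rw [List.getD_append _ _ _ _ hkl] at hk
      rw [take_append_sum_left _ _ (le_of_lt hkl)]
      exact hzero k hk
    · rcases eq_or_lt_of_le hkl with heq | hgt
      · rw [take_append_sum_left _ _ (le_of_eq heq.symm), ← heq, List.take_length]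
        exact hsum
      · exfalso
        rw [List.getD_eq_default] at hk
        · omega
        · simp; omega

lemma valid_append_prim {v p : List ℤ} (hv : ValidW v) (hp : PrimW p) : ValidW (v ++ p) := by
  obtain ⟨hpre, hsum, hzero⟩ := hv
  refine ⟨?_, by simp [hsum, hp.2.1], ?_⟩
  · intro k
    rcases le_or_gt k v.length with hk | hk
    · rw [take_append_sum_left _ _ hk]; exact hpre k
    · rw [show k = v.length + (k - v.length) by omega, take_append_sum v p _]
      have := prim_take_nonneg hp (k - v.length)
      omega
  · intro k hk
    rcases lt_or_ge k v.length with hkl | hkl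
    · rw [List.getD_append _ _ _ _ hkl] at hk
      rw [take_append_sum_left _ _ (le_of_lt hkl)]
      exact hzero k hk
    · exfalso
      rcases lt_or_ge k (v.length + p.length) with hk2 | hk2
      · rw [List.getD_append_right _ _ _ _ hkl] at hk
        have hmem : p.getD (k - v.length) 1 ∈ p := by
          rw [List.getD_eq_getElem _ _ (by omega)]
          exact List.getElem_mem _
        rcases hp.1 _ hmem with h | h <;> omega
      · rw [List.getD_eq_default] at hk
        · omega
        · simp; omega

lemma last_append_zero (v : List ℤ) : (v ++ [0]).getD ((v ++ [0]).length - 1) 1 = 0 := by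
  rw [List.length_append, List.length_singleton,
    show v.length + 1 - 1 = v.length from rfl,
    List.getD_append_right _ _ _ _ (le_refl _)]
  simp

lemma last_append_prim {v p : List ℤ} (hp : PrimW p) :
    (v ++ p).getD ((v ++ p).length - 1) 1 = -1 := by
  have h2 := hp.2.2.1
  rw [List.length_append,
    show v.length + p.length - 1 = v.length + (p.length - 1) by omega,
    List.getD_append_right _ _ _ _ (by omega),
    show v.length + (p.length - 1) - v.length = p.length - 1 by omega]
  exact prim_last hp


/-! ### the VF recursion -/

lemma valid_last_cases {l : List ℤ} (hlen : 0 < l.length) (hE : Entries l) (hv : ValidW l) :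
    l.getD (l.length - 1) 0 = 0 ∨ l.getD (l.length - 1) 0 = -1 := by
  have hl1 : l.length - 1 < l.length := by omega
  have hmem : l.getD (l.length - 1) 0 ∈ l := by
    rw [List.getD_eq_getElem _ _ hl1]
    exact List.getElem_mem _
  rcases hE _ hmem with h1 | h0 | hm1
  · exfalso
    have hs := sum_take_succ' l (l.length - 1) hl1
    rw [show l.length - 1 + 1 = l.length by omega, List.take_length, hv.2.1, h1] at hs
    have := hv.1 (l.length - 1)
    omega
  · exact Or.inl h0
  · exact Or.inr hm1

lemma take_pred_sum {l : List ℤ} (hlen : 0 < l.length) (hsum : l.sum = 0) :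
    (l.take (l.length - 1)).sum = -(l.getD (l.length - 1) 0) := by
  have hl1 : l.length - 1 < l.length := by omega
  have hs := sum_take_succ' l (l.length - 1) hl1
  rw [show l.length - 1 + 1 = l.length by omega, List.take_length, hsum] at hs
  omega

lemma eq_take_append_last {l : List ℤ} (hlen : 0 < l.length) :
    l = l.take (l.length - 1) ++ [l.getD (l.length - 1) 0] := by
  have hne : l ≠ [] := by intro h; rw [h] at hlen; simp at hlen
  conv_lhs => rw [← List.dropLast_append_getLast hne]
  rw [List.dropLast_eq_take, List.getLast_eq_getElem,
    List.getD_eq_getElem _ _ (by omega : l.length - 1 < l.length)]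

lemma VF_card (n : ℕ) (hn : 1 ≤ n) :
    (VF n).card = (VF (n-1)).card
      + ∑ i ∈ Finset.Icc 1 (n/2), (PF i).card * (VF (n - 2*i)).card := by
  classical
  set A := (VF (n-1)).image (fun v => v ++ [0]) with hA
  set B := (Finset.Icc 1 (n/2)).biUnion
      (fun i => ((PF i) ×ˢ (VF (n - 2*i))).image (fun q => q.2 ++ q.1)) with hB
  have lastA : ∀ l ∈ A, l.getD (l.length - 1) 1 = 0 := by
    intro l hl
    rw [hA, Finset.mem_image] at hl
    obtain ⟨v, _, rfl⟩ := hl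
    exact last_append_zero v
  have lastB : ∀ l ∈ B, l.getD (l.length - 1) 1 = -1 := by
    intro l hl
    rw [hB, Finset.mem_biUnion] at hl
    obtain ⟨i, _, hl⟩ := hl
    rw [Finset.mem_image] at hl
    obtain ⟨q, hq, rfl⟩ := hl
    exact last_append_prim (mem_PF.mp (Finset.mem_product.mp hq).1).2
  have hset : VF n = A ∪ B := by
    ext l
    constructor
    · intro hl
      obtain ⟨hlen, hE, hval⟩ := mem_VF.mp hl
      have hlpos : 0 < l.length := by omega
      rcases valid_last_cases hlpos hE hval with h0 | hm1
      · -- ends with 0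
        refine Finset.mem_union_left _ (Finset.mem_image.mpr ⟨l.take (l.length - 1), ?_, ?_⟩)
        · refine mem_VF.mpr ⟨by simp [List.length_take]; omega, ?_, ?_⟩
          · intro x hx; exact hE x (List.take_subset _ _ hx)
          · exact valid_take hval _ (by rw [take_pred_sum hlpos hval.2.1, h0]; ring)
        · conv_rhs => rw [eq_take_append_last hlpos]
          rw [h0]
      · -- ends with -1, decompose
        obtain ⟨v, p, hvp, hvval, hvE, hpprim⟩ := decomp hE hval (by
          intro h; rw [h] at hlpos; simp at hlpos) hm1
        obtain ⟨i, hpi, hi1⟩ := prim_even hpprim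
        have hvlen : v.length = n - 2*i := by
          have := congrArg List.length hvp
          simp at this
          omega
        have h2in : 2*i ≤ n := by
          have := congrArg List.length hvp
          simp at this
          omega
        refine Finset.mem_union_right _ (Finset.mem_biUnion.mpr ⟨i, Finset.mem_Icc.mpr ⟨hi1, by omega⟩, ?_⟩)
        refine Finset.mem_image.mpr ⟨(p, v), Finset.mem_product.mpr ⟨mem_PF.mpr ⟨hpi, hpprim⟩, mem_VF.mpr ⟨hvlen, hvE, hvval⟩⟩, hvp.symm⟩
    · intro hl
      rcases Finset.mem_union.mp hl with hl | hl
      · rw [hA, Finset.mem_image] at hl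
        obtain ⟨v, hv, rfl⟩ := hl
        obtain ⟨hvlen, hvE, hvval⟩ := mem_VF.mp hv
        refine mem_VF.mpr ⟨by simp [hvlen]; omega, ?_, valid_append_zero hvval⟩
        exact entries_append hvE (by intro x hx; simp at hx; simp [hx])
      · rw [hB, Finset.mem_biUnion] at hl
        obtain ⟨i, hi, hl⟩ := hl
        rw [Finset.mem_image] at hl
        obtain ⟨⟨p, v⟩, hq, rfl⟩ := hl
        obtain ⟨hq1, hq2⟩ := Finset.mem_product.mp hq
        obtain ⟨hplen, hpprim⟩ := mem_PF.mp hq1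
        obtain ⟨hvlen, hvE, hvval⟩ := mem_VF.mp hq2
        rw [Finset.mem_Icc] at hi
        refine mem_VF.mpr ⟨by simp [hvlen, hplen]; omega, ?_, valid_append_prim hvval hpprim⟩
        exact entries_append hvE (pm_entries hpprim.1)
  have hdisj : Disjoint A B := by
    rw [Finset.disjoint_left]
    intro l hlA hlB
    have := lastA l hlA
    have := lastB l hlB
    omega
  have hpair : ((Finset.Icc 1 (n/2) : Finset ℕ) : Set ℕ).PairwiseDisjoint
      (fun i => ((PF i) ×ˢ (VF (n - 2*i))).image (fun q : List ℤ × List ℤ => q.2 ++ q.1)) := by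
    intro i hi j hj hij
    simp only [Function.onFun]
    rw [Finset.disjoint_left]
    intro l hli hlj
    rw [Finset.mem_image] at hli hlj
    obtain ⟨⟨p1, v1⟩, hq1, he1⟩ := hli
    obtain ⟨⟨p2, v2⟩, hq2, he2⟩ := hlj
    obtain ⟨ha1, hb1⟩ := Finset.mem_product.mp hq1
    obtain ⟨ha2, hb2⟩ := Finset.mem_product.mp hq2
    have heq : v1 ++ p1 = v2 ++ p2 := by rw [he1, he2]
    have := prim_split_unique (mem_VF.mp hb1).2.2.2.1 (mem_PF.mp ha1).2
      (mem_VF.mp hb2).2.2.2.1 (mem_PF.mp ha2).2 heq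
    apply hij
    have h1 := (mem_PF.mp ha1).1
    have h2 := (mem_PF.mp ha2).1
    rw [this.2] at h1
    omega
  rw [hset, Finset.card_union_of_disjoint hdisj, Finset.card_biUnion hpair]
  congr 1
  · rw [hA]
    exact Finset.card_image_of_injective _ (List.append_left_injective _)
  · apply Finset.sum_congr rfl
    intro i hi
    rw [Finset.card_image_of_injOn, Finset.card_product]
    rintro ⟨p1, v1⟩ hq1 ⟨p2, v2⟩ hq2 he
    simp only [Finset.mem_coe, Finset.mem_product] at hq1 hq2
    have hv1 := (mem_VF.mp hq1.2).1
    have hv2 := (mem_VF.mp hq2.2).1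
    have heq : v1 ++ p1 = v2 ++ p2 := he
    obtain ⟨h1, h2⟩ := List.append_inj heq (by rw [hv1, hv2])
    simp [h1, h2]


/-! ### Dyck words and Catalan -/

lemma pm_zeroOK {l : List ℤ} (h : PM l) : ZeroOK l := by
  intro k hk
  exfalso
  rcases lt_or_ge k l.length with hkl | hkl
  · have hmem : l.getD k 1 ∈ l := by
      rw [List.getD_eq_getElem _ _ hkl]
      exact List.getElem_mem _
    rcases h _ hmem with h1 | h1 <;> omega
  · rw [List.getD_eq_default _ _ hkl] at hk
    omega

lemma dyck_valid {l : List ℤ} (h : DyckW l) : ValidW l := ⟨h.2.1, h.2.2, pm_zeroOK h.1⟩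

lemma DF_card (m : ℕ) (hm : 1 ≤ m) :
    (DF m).card = ∑ i ∈ Finset.Icc 1 m, (PF i).card * (DF (m-i)).card := by
  classical
  have hset : DF m = (Finset.Icc 1 m).biUnion
      (fun i => ((PF i) ×ˢ (DF (m - i))).image (fun q => q.2 ++ q.1)) := by
    ext l
    constructor
    · intro hl
      obtain ⟨hlen, hdy⟩ := mem_DF.mp hl
      have hlpos : 0 < l.length := by omega
      have hval := dyck_valid hdy
      have hE := pm_entries hdy.1
      have hm1 : l.getD (l.length - 1) 0 = -1 := by
        rcases valid_last_cases hlpos hE hval with h0 | h1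
        · exfalso
          have hmem : l.getD (l.length - 1) 0 ∈ l := by
            rw [List.getD_eq_getElem _ _ (by omega : l.length - 1 < l.length)]
            exact List.getElem_mem _
          rcases hdy.1 _ hmem with h | h <;> omega
        · exact h1
      obtain ⟨v, p, hvp, hvval, hvE, hpprim⟩ := decomp hE hval
        (by intro h; rw [h] at hlpos; simp at hlpos) hm1
      obtain ⟨i, hpi, hi1⟩ := prim_even hpprim
      have hlen2 : v.length + p.length = 2*m := by
        have := congrArg List.length hvp
        simp at this
        omega
      have hvlen : v.length = 2*(m - i) := by omega
      have hvpm : PM v := by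
        intro x hx
        exact hdy.1 x (by rw [hvp]; exact List.mem_append_left _ hx)
      refine Finset.mem_biUnion.mpr ⟨i, Finset.mem_Icc.mpr ⟨hi1, by omega⟩, ?_⟩
      refine Finset.mem_image.mpr ⟨(p, v), Finset.mem_product.mpr
        ⟨mem_PF.mpr ⟨hpi, hpprim⟩, mem_DF.mpr ⟨hvlen, hvpm, hvval.1, hvval.2.1⟩⟩, hvp.symm⟩
    · intro hl
      obtain ⟨i, hi, hl⟩ := Finset.mem_biUnion.mp hl
      obtain ⟨⟨p, v⟩, hq, rfl⟩ := Finset.mem_image.mp hl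
      obtain ⟨hq1, hq2⟩ := Finset.mem_product.mp hq
      obtain ⟨hplen, hpprim⟩ := mem_PF.mp hq1
      obtain ⟨hvlen, hvdy⟩ := mem_DF.mp hq2
      rw [Finset.mem_Icc] at hi
      have hval := valid_append_prim (dyck_valid hvdy) hpprim
      refine mem_DF.mpr ⟨by simp [hvlen, hplen]; omega, ?_, hval.1, hval.2.1⟩
      intro x hx
      rcases List.mem_append.mp hx with h | h
      exacts [hvdy.1 x h, hpprim.1 x h]
  have hpair : ((Finset.Icc 1 m : Finset ℕ) : Set ℕ).PairwiseDisjoint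
      (fun i => ((PF i) ×ˢ (DF (m - i))).image (fun q : List ℤ × List ℤ => q.2 ++ q.1)) := by
    intro i hi j hj hij
    simp only [Function.onFun]
    rw [Finset.disjoint_left]
    intro l hli hlj
    obtain ⟨⟨p1, v1⟩, hq1, he1⟩ := Finset.mem_image.mp hli
    obtain ⟨⟨p2, v2⟩, hq2, he2⟩ := Finset.mem_image.mp hlj
    obtain ⟨ha1, hb1⟩ := Finset.mem_product.mp hq1
    obtain ⟨ha2, hb2⟩ := Finset.mem_product.mp hq2
    have heq : v1 ++ p1 = v2 ++ p2 := by rw [he1, he2]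
    have := prim_split_unique (mem_DF.mp hb1).2.2.2 (mem_PF.mp ha1).2
      (mem_DF.mp hb2).2.2.2 (mem_PF.mp ha2).2 heq
    apply hij
    have h1 := (mem_PF.mp ha1).1
    have h2 := (mem_PF.mp ha2).1
    rw [this.2] at h1
    omega
  rw [hset, Finset.card_biUnion hpair]
  apply Finset.sum_congr rfl
  intro i hi
  rw [Finset.card_image_of_injOn, Finset.card_product]
  rintro ⟨p1, v1⟩ hq1 ⟨p2, v2⟩ hq2 he
  simp only [Finset.mem_coe, Finset.mem_product] at hq1 hq2
  have hv1 := (mem_DF.mp hq1.2).1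
  have hv2 := (mem_DF.mp hq2.2).1
  have heq : v1 ++ p1 = v2 ++ p2 := he
  obtain ⟨h1, h2⟩ := List.append_inj heq (by rw [hv1, hv2])
  simp [h1, h2]

lemma PF_card (i : ℕ) (hi : 1 ≤ i) :
    (PF i).card = (DF (i-1)).card := by
  classical
  have hset : PF i = (DF (i-1)).image (fun d => 1 :: (d ++ [-1])) := by
    ext p
    constructor
    · intro hp
      obtain ⟨hlen, hprim⟩ := mem_PF.mp hp
      have h2 := hprim.2.2.1
      cases p with
      | nil => simp at hlen; omega
      | cons a rest =>
        have hrestlen : rest.length = 2*i - 1 := by simp at hlen; omega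
        have hrestpos : 0 < rest.length := by omega
        have ha : a = 1 := by
          have hs := hprim.2.2.2 1 one_pos (by omega)
          simp [List.take_cons] at hs
          rcases hprim.1 a List.mem_cons_self with h | h
          · exact h
          · omega
        have hlast : rest.getD (rest.length - 1) 0 = -1 := by
          have h := prim_last hprim
          rw [show (a :: rest).length - 1 = (rest.length - 1) + 1 by simp; omega,
            List.getD_cons_succ] at h
          rw [List.getD_eq_getElem _ _ (by omega : rest.length - 1 < rest.length)] at h ⊢
          exact h
        set d := rest.take (rest.length - 1) with hd
        have hrest : rest = d ++ [-1] := by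
          conv_lhs => rw [eq_take_append_last hrestpos]
          rw [hlast]
        have hdlen : d.length = 2*(i-1) := by
          rw [hd]; simp [List.length_take]; omega
        have hdpm : PM d := by
          intro x hx
          exact hprim.1 x (List.mem_cons_of_mem _ (by rw [hrest]; exact List.mem_append_left _ hx))
        have hdsum : d.sum = 0 := by
          have := hprim.2.1
          rw [show a :: rest = [a] ++ rest from rfl] at this
          rw [hrest, ha] at this
          simp at this
          linarith [this]
        have hdpre : Pre d := by
          intro k
          rcases le_or_gt d.length k with hk | hk
          · rw [List.take_of_length_le hk, hdsum]
          · have hkey := hprim.2.2.2 (k+1) (by omega) (by simp; omega)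
            rw [List.take_succ_cons] at hkey
            have htake : rest.take k = d.take k := by
              rw [hrest, List.take_append, show k - d.length = 0 by omega]
              simp
            rw [htake, List.sum_cons, ha] at hkey
            omega
        refine Finset.mem_image.mpr ⟨d, mem_DF.mpr ⟨hdlen, hdpm, hdpre, hdsum⟩, ?_⟩
        rw [ha, hrest]
    · intro hp
      obtain ⟨d, hd, rfl⟩ := Finset.mem_image.mp hp
      obtain ⟨hdlen, hdpm, hdpre, hdsum⟩ :
          d.length = 2*(i-1) ∧ PM d ∧ Pre d ∧ d.sum = 0 := by
        obtain ⟨h1, h2⟩ := mem_DF.mp hd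
        exact ⟨h1, h2.1, h2.2.1, h2.2.2⟩
      refine mem_PF.mpr ⟨by simp only [List.length_cons, List.length_append, List.length_singleton, List.length_nil, hdlen]; omega, ?_, by simp [hdsum], by simp only [List.length_cons, List.length_append, List.length_singleton, List.length_nil, hdlen]; omega, ?_⟩
      · intro x hx
        rcases List.mem_cons.mp hx with rfl | hx
        · exact Or.inl rfl
        rcases List.mem_append.mp hx with h | h
        · exact hdpm x h
        · simp at h; exact Or.inr (by rw [h])
      · intro k hk1 hk2
        simp only [List.length_cons, List.length_append, List.length_singleton, List.length_nil] at hk2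
        have hk3 : k - 1 ≤ d.length := by omega
        rw [show k = (k-1) + 1 by omega, List.take_succ_cons, List.sum_cons,
          take_append_sum_left _ _ hk3]
        have := hdpre (k-1)
        omega
  rw [hset, Finset.card_image_of_injective]
  intro d1 d2 h
  simp only [List.cons.injEq, true_and] at h
  exact List.append_left_injective _ h


lemma DF_zero : DF 0 = {[]} := by
  ext l
  rw [mem_DF]
  constructor
  · rintro ⟨h1, _⟩
    simp [List.length_eq_zero_iff.mp (by omega : l.length = 0)]
  · rintro h
    simp only [Finset.mem_singleton] at h
    subst h
    refine ⟨rfl, by intro x hx; simp at hx, by intro k; simp, rfl⟩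

lemma VF_zero : VF 0 = {[]} := by
  ext l
  rw [mem_VF]
  constructor
  · rintro ⟨h1, _⟩
    simp [List.length_eq_zero_iff.mp (by omega : l.length = 0)]
  · rintro h
    simp only [Finset.mem_singleton] at h
    subst h
    exact ⟨rfl, by intro x hx; simp at hx, by intro k; simp, rfl, by intro k hk; simp at hk⟩

lemma DF_catalan : ∀ m, (DF m).card = catalan m := by
  intro m
  induction m using Nat.strong_induction_on with
  | _ m ih =>
    match m with
    | 0 => simp [DF_zero, catalan_zero]
    | (m+1) =>
      rw [DF_card (m+1) (by omega)]
      have hstep : ∀ i ∈ Finset.Icc 1 (m+1),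
          (PF i).card * (DF (m+1-i)).card = catalan (i-1) * catalan (m+1-i) := by
        intro i hi
        rw [Finset.mem_Icc] at hi
        rw [PF_card i hi.1, ih (i-1) (by omega), ih (m+1-i) (by omega)]
      rw [Finset.sum_congr rfl hstep]
      rw [catalan_succ, ← Finset.sum_range (fun i => catalan i * catalan (m - i))]
      have hmap : Finset.Icc 1 (m+1)
          = Finset.map ⟨fun j => j + 1, add_left_injective 1⟩ (Finset.range (m+1)) := by
        ext x
        simp only [Finset.mem_Icc, Finset.mem_map, Finset.mem_range,
          Function.Embedding.coeFn_mk]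
        constructor
        · rintro ⟨h1, h2⟩; exact ⟨x - 1, by omega, by omega⟩
        · rintro ⟨j, hj, rfl⟩; omega
      rw [hmap, Finset.sum_map]
      apply Finset.sum_congr rfl
      intro j hj
      simp only [Function.Embedding.coeFn_mk]
      rw [show j + 1 - 1 = j by omega, show m + 1 - (j+1) = m - j by omega]

lemma PF_catalan (i : ℕ) (hi : 1 ≤ i) : (PF i).card = catalan (i-1) := by
  rw [PF_card i hi, DF_catalan]

lemma VF_card_catalan (n : ℕ) (hn : 1 ≤ n) :
    (VF n).card = (VF (n-1)).card
      + ∑ i ∈ Finset.Icc 1 (n/2), catalan (i-1) * (VF (n - 2*i)).card := by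
  rw [VF_card n hn]
  congr 1
  apply Finset.sum_congr rfl
  intro i hi
  rw [Finset.mem_Icc] at hi
  rw [PF_catalan i hi.1]

-- generic sum splitting
lemma sum_pm_split (s : Finset ℕ) (g : ℕ → ℤ) (hg : ∀ j ∈ s, g j = 1 ∨ g j = 0 ∨ g j = -1) :
    ∑ j ∈ s, g j =
      ((s.filter (fun j => g j = 1)).card : ℤ) - (s.filter (fun j => g j = -1)).card := by
  have hpt : ∀ j ∈ s, g j = (if g j = 1 then (1:ℤ) else 0) + (if g j = -1 then (-1:ℤ) else 0) := by
    intro j hj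
    rcases hg j hj with h | h | h <;> simp [h]
  rw [Finset.sum_congr rfl hpt, Finset.sum_add_distrib, ← Finset.sum_filter, ← Finset.sum_filter]
  simp [Finset.sum_const, sub_eq_add_neg]

lemma Icc_one_eq_map (k : ℕ) :
    Finset.Icc 1 k = Finset.map ⟨fun j => j + 1, add_left_injective 1⟩ (Finset.range k) := by
  ext x
  simp only [Finset.mem_Icc, Finset.mem_map, Finset.mem_range, Function.Embedding.coeFn_mk]
  constructor
  · rintro ⟨h1, h2⟩; exact ⟨x - 1, by omega, by omega⟩
  · rintro ⟨j, hj, rfl⟩; omega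

lemma take_sum_eq_range (l : List ℤ) : ∀ k, k ≤ l.length →
    (l.take k).sum = ∑ i ∈ Finset.range k, l.getD i 0 := by
  intro k
  induction k with
  | zero => simp
  | succ k ih =>
    intro hk
    rw [Finset.sum_range_succ, ← ih (by omega)]
    exact Mi321.sum_take_succ' l k (by omega)

-- cardinality of elements of a finset below the i-th one
lemma filter_le_orderEmb_card {s : Finset ℕ} {c : ℕ} (h : s.card = c) (i : Fin c) :
    (s.filter (fun x => x ≤ s.orderEmbOfFin h i)).card = i + 1 := by
  have himg : s.filter (fun x => x ≤ s.orderEmbOfFin h i)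
      = (Finset.univ.filter (fun j : Fin c => j ≤ i)).image (s.orderEmbOfFin h) := by
    ext x
    simp only [Finset.mem_filter, Finset.mem_image, Finset.mem_univ, true_and]
    constructor
    · rintro ⟨hxs, hxle⟩
      have : x ∈ Set.range (s.orderEmbOfFin h) := by
        rw [Finset.range_orderEmbOfFin]; exact hxs
      obtain ⟨j, hj⟩ := this
      refine ⟨j, ?_, hj⟩
      rw [← hj] at hxle
      exact (OrderEmbedding.le_iff_le _).mp hxle
    · rintro ⟨j, hji, rfl⟩
      exact ⟨s.orderEmbOfFin_mem h j, (OrderEmbedding.le_iff_le _).mpr hji⟩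
  rw [himg, Finset.card_image_of_injective _ (s.orderEmbOfFin h).injective]
  have : Finset.univ.filter (fun j : Fin c => j ≤ i) = Finset.Iic i := by
    ext j; simp
  rw [this, Fin.card_Iic]

lemma filter_le_card_lt {s : Finset ℕ} {c : ℕ} (h : s.card = c) (i : Fin c) {k : ℕ}
    (hk : k < s.orderEmbOfFin h i) :
    (s.filter (fun x => x ≤ k)).card ≤ i := by
  have hsub : s.filter (fun x => x ≤ k)
      ⊆ (Finset.univ.filter (fun j : Fin c => j < i)).image (s.orderEmbOfFin h) := by
    intro x hx
    obtain ⟨hxs, hxle⟩ := Finset.mem_filter.mp hx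
    have : x ∈ Set.range (s.orderEmbOfFin h) := by
      rw [Finset.range_orderEmbOfFin]; exact hxs
    obtain ⟨j, hj⟩ := this
    refine Finset.mem_image.mpr ⟨j, Finset.mem_filter.mpr ⟨Finset.mem_univ _, ?_⟩, hj⟩
    by_contra hji
    push_neg at hji
    have := (OrderEmbedding.le_iff_le (s.orderEmbOfFin h)).mpr hji
    rw [hj] at this
    omega
  calc (s.filter (fun x => x ≤ k)).card
      ≤ _ := Finset.card_le_card hsub
    _ ≤ (Finset.univ.filter (fun j : Fin c => j < i)).card := Finset.card_image_le
    _ = i := by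
        have : Finset.univ.filter (fun j : Fin c => j < i) = Finset.Iio i := by
          ext j; simp
        rw [this, Fin.card_Iio]

lemma filter_le_card_ge {s : Finset ℕ} {c : ℕ} (h : s.card = c) (i : Fin c) {k : ℕ}
    (hk : (s.orderEmbOfFin h i : ℕ) ≤ k) :
    (i : ℕ) + 1 ≤ (s.filter (fun x => x ≤ k)).card := by
  rw [← filter_le_orderEmb_card h i]
  apply Finset.card_le_card
  intro x hx
  obtain ⟨h1, h2⟩ := Finset.mem_filter.mp hx
  exact Finset.mem_filter.mpr ⟨h1, le_trans h2 hk⟩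


/-! ### permutations to words -/

def entry (w : Equiv.Perm ℕ) (j : ℕ) : ℤ :=
  if j < w j then 1 else if w j < j then -1 else 0

def wordOf (n : ℕ) (w : Equiv.Perm ℕ) : List ℤ :=
  (List.range n).map (fun k => entry w (k+1))

lemma entry_cases (w : Equiv.Perm ℕ) (j : ℕ) : entry w j = 1 ∨ entry w j = 0 ∨ entry w j = -1 := by
  unfold entry; split_ifs <;> simp

lemma entry_eq_one_iff (w : Equiv.Perm ℕ) (j : ℕ) : entry w j = 1 ↔ j < w j := by
  unfold entry
  split_ifs with h1 h2
  · simp [h1]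
  · simp [h2]; omega
  · simp; omega

lemma entry_eq_negone_iff (w : Equiv.Perm ℕ) (j : ℕ) : entry w j = -1 ↔ w j < j := by
  unfold entry
  split_ifs with h1 h2
  · simp [h1]; omega
  · simp [h2]
  · simp; omega

lemma entry_eq_zero_iff (w : Equiv.Perm ℕ) (j : ℕ) : entry w j = 0 ↔ w j = j := by
  unfold entry
  split_ifs with h1 h2
  · simp; omega
  · simp; omega
  · simp; omega

lemma wordOf_length (n : ℕ) (w : Equiv.Perm ℕ) : (wordOf n w).length = n := by simp [wordOf]

lemma wordOf_getD (n : ℕ) (w : Equiv.Perm ℕ) (k : ℕ) (hk : k < n) (d : ℤ) :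
    (wordOf n w).getD k d = entry w (k+1) := by
  rw [List.getD_eq_getElem _ _ (by rw [wordOf_length]; omega)]
  simp [wordOf]

lemma wordOf_take_sum (n : ℕ) (w : Equiv.Perm ℕ) (k : ℕ) (hk : k ≤ n) :
    ((wordOf n w).take k).sum = ∑ j ∈ Finset.Icc 1 k, entry w j := by
  rw [take_sum_eq_range _ k (by rw [wordOf_length]; omega), Icc_one_eq_map, Finset.sum_map]
  apply Finset.sum_congr rfl
  intro i hi
  rw [Finset.mem_range] at hi
  simp only [Function.Embedding.coeFn_mk]
  rw [wordOf_getD n w i (by omega)]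

lemma inv_apply {w : Equiv.Perm ℕ} (h : w * w = 1) (k : ℕ) : w (w k) = k := by
  have := congrArg (fun σ : Equiv.Perm ℕ => σ k) h
  simpa using this

section PermWord
variable {n : ℕ} {w : Equiv.Perm ℕ}

lemma balance (k : ℕ) (hk : k ≤ n) :
    ((wordOf n w).take k).sum =
      (((Finset.Icc 1 k).filter (fun j => j < w j)).card : ℤ)
        - ((Finset.Icc 1 k).filter (fun j => w j < j)).card := by
  rw [wordOf_take_sum n w k hk, sum_pm_split _ _ (fun j _ => entry_cases w j)]
  congr 2
  · congr 1
    apply Finset.filter_congr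
    intro j _
    simp [entry_eq_one_iff]
  · congr 1
    apply Finset.filter_congr
    intro j _
    simp [entry_eq_negone_iff]

lemma closers_card_le (hw : IsInvolutionOn n w) (k : ℕ) :
    ((Finset.Icc 1 k).filter (fun j => w j < j)).card
      ≤ ((Finset.Icc 1 k).filter (fun j => j < w j)).card := by
  apply Finset.card_le_card_of_injOn w
  · intro j hj
    obtain ⟨hj1, hj2⟩ := Finset.mem_filter.mp hj
    rw [Finset.mem_Icc] at hj1
    have hne : w (w j) ≠ w j := by
      rw [inv_apply hw.2]; omega
    have hsupp := hw.1 _ hne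
    refine Finset.mem_filter.mpr ⟨Finset.mem_Icc.mpr ⟨hsupp.1, by omega⟩, ?_⟩
    rw [inv_apply hw.2]; exact hj2
  · exact fun a _ b _ h => w.injective h

lemma openers_card_le (hw : IsInvolutionOn n w) :
    ((Finset.Icc 1 n).filter (fun j => j < w j)).card
      ≤ ((Finset.Icc 1 n).filter (fun j => w j < j)).card := by
  apply Finset.card_le_card_of_injOn w
  · intro j hj
    obtain ⟨hj1, hj2⟩ := Finset.mem_filter.mp hj
    rw [Finset.mem_Icc] at hj1
    have hne : w j ≠ j := by omega
    have hsupp := hw.1 (w j) (by rw [inv_apply hw.2]; omega)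
    refine Finset.mem_filter.mpr ⟨Finset.mem_Icc.mpr ⟨hsupp.1, hsupp.2⟩, ?_⟩
    rw [inv_apply hw.2]; exact hj2
  · exact fun a _ b _ h => w.injective h

lemma wordOf_sum (hw : IsInvolutionOn n w) : (wordOf n w).sum = 0 := by
  have h1 := closers_card_le hw n
  have h2 := openers_card_le hw
  have hb := balance (n := n) (w := w) n (le_refl n)
  rw [List.take_of_length_le (le_of_eq (wordOf_length n w))] at hb
  rw [hb]
  omega

lemma wordOf_valid (hw : IsInvolutionOn n w) (ha : Avoids321 n w) :
    wordOf n w ∈ VF n := by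
  refine mem_VF.mpr ⟨wordOf_length n w, ?_, ?_, ?_, ?_⟩
  · -- entries
    intro x hx
    simp only [wordOf, List.mem_map] at hx
    obtain ⟨k, _, rfl⟩ := hx
    exact entry_cases w (k+1)
  · -- Pre
    intro k
    rcases le_or_gt k n with hk | hk
    · rw [balance k hk]
      have := closers_card_le hw k
      omega
    · rw [List.take_of_length_le (by rw [wordOf_length]; omega), wordOf_sum hw]
  · exact wordOf_sum hw
  · -- ZeroOK
    intro k hk
    have hkn : k < n := by
      by_contra hkn
      rw [List.getD_eq_default _ _ (by rw [wordOf_length]; omega)] at hk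
      omega
    rw [wordOf_getD n w k hkn] at hk
    set f := k + 1 with hf
    have hfix : w f = f := (entry_eq_zero_iff w f).mp hk
    have hfn : f ≤ n := by omega
    rw [balance k (by omega)]
    have hle := closers_card_le hw k
    have hge : ((Finset.Icc 1 k).filter (fun j => j < w j)).card
        ≤ ((Finset.Icc 1 k).filter (fun j => w j < j)).card := by
      apply Finset.card_le_card_of_injOn w
      · intro a haa
        obtain ⟨ha1, ha2⟩ := Finset.mem_filter.mp haa
        rw [Finset.mem_Icc] at ha1
        -- show w a ≤ k, else 321 pattern (a, f, w a)
        have hwa_le : w a ≤ k := by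
          by_contra hcon
          push_neg at hcon
          have hwa_ne_f : w a ≠ f := by
            intro he
            have : a = w f := by rw [← he, inv_apply hw.2]
            rw [hfix] at this
            omega
          have hwa_gt : f < w a := by omega
          have hwan : w a ≤ n := by
            have := hw.1 (w a) (by rw [inv_apply hw.2]; omega)
            exact this.2
          exact ha a f (w a) ha1.1 (by omega) hwa_gt hwan
            ⟨by rw [hfix]; omega, by rw [inv_apply hw.2]; omega⟩
        refine Finset.mem_filter.mpr ⟨Finset.mem_Icc.mpr ⟨?_, hwa_le⟩, ?_⟩
        · have := hw.1 (w a) (by rw [inv_apply hw.2]; omega)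
          exact this.1
        · rw [inv_apply hw.2]; omega
      · exact fun a _ b _ h => w.injective h
    omega

lemma openers_mono (hw : IsInvolutionOn n w) (ha : Avoids321 n w)
    {a b : ℕ} (hab : a < b) (hA : a < w a) (hB : b < w b) : w a < w b := by
  by_contra hcon
  push_neg at hcon
  have hne : w a ≠ w b := fun h => by have := w.injective h; omega
  have hlt : w b < w a := by omega
  have ha1 : 1 ≤ a := (hw.1 a (by omega)).1
  have hbn : w b ≤ n := (hw.1 (w b) (by rw [inv_apply hw.2]; omega)).2
  exact ha a b (w b) ha1 hab hB hbn ⟨hlt, by rw [inv_apply hw.2]; omega⟩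

end PermWord
/-! ### injectivity -/

lemma wordOf_injOn {n : ℕ} {w1 w2 : Equiv.Perm ℕ}
    (h1 : IsInvolutionOn n w1) (a1 : Avoids321 n w1)
    (h2 : IsInvolutionOn n w2) (a2 : Avoids321 n w2)
    (heq : wordOf n w1 = wordOf n w2) : w1 = w2 := by
  classical
  have hent : ∀ j, entry w1 j = entry w2 j := by
    intro j
    rcases Nat.eq_zero_or_pos j with rfl | hj
    · have e1 : w1 0 = 0 := by
        by_contra hc; have := (h1.1 0 hc).1; omega
      have e2 : w2 0 = 0 := by
        by_contra hc; have := (h2.1 0 hc).1; omega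
      rw [(entry_eq_zero_iff w1 0).mpr e1, (entry_eq_zero_iff w2 0).mpr e2]
    rcases le_or_gt j n with hjn | hjn
    · have hgd := congrArg (fun t : List ℤ => t.getD (j-1) (0:ℤ)) heq
      rw [wordOf_getD n w1 (j-1) (by omega), wordOf_getD n w2 (j-1) (by omega),
        show j - 1 + 1 = j by omega] at hgd
      exact hgd
    · have e1 : w1 j = j := by
        by_contra hc; have := (h1.1 j hc).2; omega
      have e2 : w2 j = j := by
        by_contra hc; have := (h2.1 j hc).2; omega
      rw [(entry_eq_zero_iff w1 j).mpr e1, (entry_eq_zero_iff w2 j).mpr e2]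
  set O := (Finset.Icc 1 n).filter (fun j => j < w1 j) with hO
  set C := (Finset.Icc 1 n).filter (fun j => w1 j < j) with hC
  have hO2 : O = (Finset.Icc 1 n).filter (fun j => j < w2 j) := by
    rw [hO]
    apply Finset.filter_congr
    intro j _
    rw [← entry_eq_one_iff, ← entry_eq_one_iff, hent j]
  have hC2 : C = (Finset.Icc 1 n).filter (fun j => w2 j < j) := by
    rw [hC]
    apply Finset.filter_congr
    intro j _
    rw [← entry_eq_negone_iff, ← entry_eq_negone_iff, hent j]
  have hCcard : C.card = O.card := by
    have hle1 := closers_card_le h1 n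
    have hle2 := openers_card_le h1
    rw [hO, hC]
    omega
  -- both restrictions are strictly monotone bijections O → C
  have hmaps : ∀ (w : Equiv.Perm ℕ), IsInvolutionOn n w →
      (O = (Finset.Icc 1 n).filter (fun j => j < w j)) →
      (C = (Finset.Icc 1 n).filter (fun j => w j < j)) →
      ∀ i : Fin O.card, w (O.orderEmbOfFin rfl i) ∈ C := by
    intro w hw hOe hCe i
    set a := O.orderEmbOfFin rfl i with hadef
    have hmem : a ∈ O := O.orderEmbOfFin_mem rfl i
    rw [hOe, Finset.mem_filter, Finset.mem_Icc] at hmem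
    have hwa : w (w a) = a := inv_apply hw.2 a
    have hsupp := hw.1 (w a) (by rw [hwa]; omega)
    rw [hCe, Finset.mem_filter, Finset.mem_Icc]
    exact ⟨⟨hsupp.1, hsupp.2⟩, by rw [hwa]; omega⟩
  have hkey : ∀ (w : Equiv.Perm ℕ), IsInvolutionOn n w → Avoids321 n w →
      (O = (Finset.Icc 1 n).filter (fun j => j < w j)) →
      (C = (Finset.Icc 1 n).filter (fun j => w j < j)) →
      (fun i : Fin O.card => w (O.orderEmbOfFin rfl i)) = C.orderEmbOfFin hCcard := by
    intro w hw haw hOe hCe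
    apply Finset.orderEmbOfFin_unique hCcard (hmaps w hw hOe hCe)
    intro i j hij
    set a := O.orderEmbOfFin rfl i with hadef
    set b := O.orderEmbOfFin rfl j with hbdef
    have hi : a ∈ O := O.orderEmbOfFin_mem rfl i
    have hj : b ∈ O := O.orderEmbOfFin_mem rfl j
    rw [hOe, Finset.mem_filter] at hi hj
    exact openers_mono hw haw ((OrderEmbedding.lt_iff_lt _).mpr hij) hi.2 hj.2
  have hagreeO : ∀ a ∈ O, w1 a = w2 a := by
    intro a ha
    have : a ∈ Set.range (O.orderEmbOfFin rfl) := by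
      rw [Finset.range_orderEmbOfFin]; exact ha
    obtain ⟨i, rfl⟩ := this
    have e1 := congrFun (hkey w1 h1 a1 hO hC) i
    have e2 := congrFun (hkey w2 h2 a2 hO2 hC2) i
    exact e1.trans e2.symm
  apply Equiv.ext
  intro k
  rcases lt_trichotomy (w1 k) k with hlt | heqk | hgt
  · -- k ∈ C
    have hk1 : w1 k ≠ k := by omega
    have hks := h1.1 k hk1
    set a := w1 k with ha
    have hamem : a ∈ O := by
      rw [hO, Finset.mem_filter, Finset.mem_Icc]
      have hwa : w1 a = k := by rw [ha, inv_apply h1.2]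
      have hsupp := h1.1 a (by rw [hwa]; omega)
      exact ⟨⟨hsupp.1, hsupp.2⟩, by rw [hwa]; omega⟩
    have hwa : w1 a = k := by rw [ha, inv_apply h1.2]
    have hwa2 : w2 a = k := by rw [← hagreeO a hamem, hwa]
    have : w2 k = a := by rw [← hwa2, inv_apply h2.2]
    rw [this, ha]
  · -- fixed
    have := hent k
    rw [(entry_eq_zero_iff w1 k).mpr heqk] at this
    rw [heqk, ((entry_eq_zero_iff w2 k).mp this.symm)]
  · -- k ∈ O
    have hkmem : k ∈ O := by
      rw [hO, Finset.mem_filter, Finset.mem_Icc]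
      have hsupp := h1.1 k (by omega)
      exact ⟨⟨hsupp.1, hsupp.2⟩, hgt⟩
    exact hagreeO k hkmem
/-! ### surjectivity : building the involution from a word -/

lemma orderEmb_iso_cancel {s : Finset ℕ} {c : ℕ} (h : s.card = c) {k : ℕ} (hk : k ∈ s) :
    (s.orderEmbOfFin h) ((s.orderIsoOfFin h).symm ⟨k, hk⟩) = k := by
  have := (s.orderIsoOfFin h).apply_symm_apply ⟨k, hk⟩
  rw [← Finset.coe_orderIsoOfFin_apply]
  exact congrArg Subtype.val this

lemma exists_perm {n : ℕ} {l : List ℤ} (hl : l ∈ VF n) :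
    ∃ w : Equiv.Perm ℕ, IsInvolutionOn n w ∧ Avoids321 n w ∧ wordOf n w = l := by
  classical
  obtain ⟨hlen, hE, hpre, hsum, hzero⟩ := mem_VF.mp hl
  set O := (Finset.Icc 1 n).filter (fun j => l.getD (j-1) 0 = 1) with hO
  set C := (Finset.Icc 1 n).filter (fun j => l.getD (j-1) 0 = -1) with hCdef
  have hOIcc : ∀ a ∈ O, 1 ≤ a ∧ a ≤ n := by
    intro a ha
    rw [hO, Finset.mem_filter, Finset.mem_Icc] at ha
    exact ha.1
  have hCIcc : ∀ a ∈ C, 1 ≤ a ∧ a ≤ n := by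
    intro a ha
    rw [hCdef, Finset.mem_filter, Finset.mem_Icc] at ha
    exact ha.1
  have hOletter : ∀ a ∈ O, l.getD (a-1) 0 = 1 := by
    intro a ha; rw [hO, Finset.mem_filter] at ha; exact ha.2
  have hCletter : ∀ a ∈ C, l.getD (a-1) 0 = -1 := by
    intro a ha; rw [hCdef, Finset.mem_filter] at ha; exact ha.2
  have hletter : ∀ j, 1 ≤ j → j ≤ n → l.getD (j-1) 0 = 1 ∨ l.getD (j-1) 0 = 0 ∨ l.getD (j-1) 0 = -1 := by
    intro j hj1 hj2
    apply hE
    rw [List.getD_eq_getElem _ _ (by omega)]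
    exact List.getElem_mem _
  have hmemO : ∀ j, 1 ≤ j → j ≤ n → l.getD (j-1) 0 = 1 → j ∈ O := by
    intro j hj1 hj2 hj3
    rw [hO, Finset.mem_filter, Finset.mem_Icc]
    exact ⟨⟨hj1, hj2⟩, hj3⟩
  have hmemC : ∀ j, 1 ≤ j → j ≤ n → l.getD (j-1) 0 = -1 → j ∈ C := by
    intro j hj1 hj2 hj3
    rw [hCdef, Finset.mem_filter, Finset.mem_Icc]
    exact ⟨⟨hj1, hj2⟩, hj3⟩
  have hfix0 : ∀ j, 1 ≤ j → j ≤ n → j ∉ O → j ∉ C → l.getD (j-1) 0 = 0 := by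
    intro j hj1 hj2 hjO hjC
    rcases hletter j hj1 hj2 with h | h | h
    · exact absurd (hmemO j hj1 hj2 h) hjO
    · exact h
    · exact absurd (hmemC j hj1 hj2 h) hjC
  -- balance
  have hbal : ∀ k, k ≤ n → (l.take k).sum
      = ((O.filter (fun x => x ≤ k)).card : ℤ) - ((C.filter (fun x => x ≤ k)).card : ℤ) := by
    intro k hk
    have htak : (l.take k).sum = ∑ j ∈ Finset.Icc 1 k, l.getD (j-1) 0 := by
      rw [take_sum_eq_range l k (by omega), Icc_one_eq_map, Finset.sum_map]
      apply Finset.sum_congr rfl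
      intro i _
      simp only [Function.Embedding.coeFn_mk, Nat.add_sub_cancel]
    have hOk : (Finset.Icc 1 k).filter (fun j => l.getD (j-1) 0 = 1)
        = O.filter (fun x => x ≤ k) := by
      ext x
      simp only [hO, Finset.filter_filter, Finset.mem_filter, Finset.mem_Icc]
      constructor
      · rintro ⟨⟨hx1, hx2⟩, hx3⟩
        exact ⟨⟨hx1, by omega⟩, hx3, hx2⟩
      · rintro ⟨⟨hx1, hx2⟩, hx3, hx4⟩
        exact ⟨⟨hx1, hx4⟩, hx3⟩
    have hCk : (Finset.Icc 1 k).filter (fun j => l.getD (j-1) 0 = -1)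
        = C.filter (fun x => x ≤ k) := by
      ext x
      simp only [hCdef, Finset.filter_filter, Finset.mem_filter, Finset.mem_Icc]
      constructor
      · rintro ⟨⟨hx1, hx2⟩, hx3⟩
        exact ⟨⟨hx1, by omega⟩, hx3, hx2⟩
      · rintro ⟨⟨hx1, hx2⟩, hx3, hx4⟩
        exact ⟨⟨hx1, hx4⟩, hx3⟩
    rw [htak, sum_pm_split _ _ (fun j hj => hletter j (Finset.mem_Icc.mp hj).1
      (le_trans (Finset.mem_Icc.mp hj).2 hk)), hOk, hCk]
  have hOC : Disjoint O C := by
    rw [Finset.disjoint_left]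
    intro a ha hb
    have := hOletter a ha
    have := hCletter a hb
    omega
  have hCcard : C.card = O.card := by
    have hb := hbal n (le_refl n)
    rw [List.take_of_length_le (by omega), hsum] at hb
    have hOfull : O.filter (fun x => x ≤ n) = O := by
      apply Finset.filter_true_of_mem
      intro x hx; exact (hOIcc x hx).2
    have hCfull : C.filter (fun x => x ≤ n) = C := by
      apply Finset.filter_true_of_mem
      intro x hx; exact (hCIcc x hx).2
    rw [hOfull, hCfull] at hb
    omega
  set eO := O.orderEmbOfFin (rfl : O.card = O.card) with heO
  set eC := C.orderEmbOfFin hCcard with heC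
  have heOmem : ∀ i, eO i ∈ O := fun i => O.orderEmbOfFin_mem rfl i
  have heCmem : ∀ i, eC i ∈ C := fun i => C.orderEmbOfFin_mem hCcard i
  -- arcs go left-to-right
  have hlt : ∀ i : Fin O.card, eO i < eC i := by
    intro i
    by_contra hcon
    push_neg at hcon
    have hne : (eC i : ℕ) ≠ eO i := by
      intro h
      have hmm := heCmem i
      rw [h] at hmm
      exact (Finset.disjoint_left.mp hOC) (heOmem i) hmm
    have hlt2 : eC i < eO i := by omega
    have h1 := filter_le_card_ge hCcard i (le_refl (eC i : ℕ))
    have h2 := filter_le_card_lt (rfl : O.card = O.card) i hlt2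
    have hb := hbal (eC i) (hCIcc _ (heCmem i)).2
    have hp := hpre (eC i)
    rw [hb] at hp
    omega
  -- no fixed point strictly inside an arc
  have hnofix : ∀ (i : Fin O.card) (x : ℕ), 1 ≤ x → x ≤ n → x ∉ O → x ∉ C →
      ¬(eO i < x ∧ x < eC i) := by
    rintro i x hx1 hx2 hxO hxC ⟨hax, hxb⟩
    have hx0 : l.getD (x-1) 0 = 0 := hfix0 x hx1 hx2 hxO hxC
    have hx0' : l.getD (x-1) 1 = 0 := by
      rw [List.getD_eq_getElem _ _ (by omega : x - 1 < l.length)]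
      rw [List.getD_eq_getElem _ _ (by omega : x - 1 < l.length)] at hx0
      exact hx0
    have hz := hzero (x-1) hx0'
    have hb := hbal (x-1) (by omega)
    have h1 := filter_le_card_ge (rfl : O.card = O.card) i (by omega : (eO i : ℕ) ≤ x - 1)
    have h2 := filter_le_card_lt hCcard i (by omega : x - 1 < eC i)
    rw [hz] at hb
    omega
  -- the involution
  set f : ℕ → ℕ := fun k =>
    if hk : k ∈ O then eC ((O.orderIsoOfFin rfl).symm ⟨k, hk⟩)
    else if hk2 : k ∈ C then eO ((C.orderIsoOfFin hCcard).symm ⟨k, hk2⟩)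
    else k with hf
  have hfO : ∀ k (hk : k ∈ O), ∃ i : Fin O.card, eO i = k ∧ f k = eC i := by
    intro k hk
    refine ⟨(O.orderIsoOfFin rfl).symm ⟨k, hk⟩, orderEmb_iso_cancel rfl hk, ?_⟩
    rw [hf]
    simp only [dif_pos hk]
  have hfC : ∀ k (hk : k ∈ C), ∃ i : Fin O.card, eC i = k ∧ f k = eO i := by
    intro k hk
    have hkO : k ∉ O := Finset.disjoint_right.mp hOC hk
    refine ⟨(C.orderIsoOfFin hCcard).symm ⟨k, hk⟩, orderEmb_iso_cancel hCcard hk, ?_⟩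
    rw [hf]
    simp only [dif_neg hkO, dif_pos hk]
  have hfF : ∀ k, k ∉ O → k ∉ C → f k = k := by
    intro k hk1 hk2
    rw [hf]
    simp only [dif_neg hk1, dif_neg hk2]
  have hinv : Function.Involutive f := by
    intro k
    by_cases hk : k ∈ O
    · obtain ⟨i, hei, hfk⟩ := hfO k hk
      rw [hfk]
      obtain ⟨i', hei', hfk'⟩ := hfC (eC i) (heCmem i)
      rw [hfk']
      have : i' = i := eC.injective hei'
      rw [this, hei]
    · by_cases hk2 : k ∈ C
      · obtain ⟨i, hei, hfk⟩ := hfC k hk2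
        rw [hfk]
        obtain ⟨i', hei', hfk'⟩ := hfO (eO i) (heOmem i)
        rw [hfk']
        have : i' = i := eO.injective hei'
        rw [this, hei]
      · rw [hfF k hk hk2, hfF k hk hk2]
  have harcO : ∀ k (hk : k ∈ O), k < f k := by
    intro k hk
    obtain ⟨i, hei, hfk⟩ := hfO k hk
    rw [hfk, ← hei]
    exact hlt i
  have harcC : ∀ k (hk : k ∈ C), f k < k := by
    intro k hk
    obtain ⟨i, hei, hfk⟩ := hfC k hk
    rw [hfk, ← hei]
    exact hlt i
  have hmonoO : ∀ a b, a ∈ O → b ∈ O → a < b → f a < f b := by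
    intro a b ha hb hab
    obtain ⟨i, hei, hfa⟩ := hfO a ha
    obtain ⟨j, hej, hfb⟩ := hfO b hb
    rw [hfa, hfb]
    have : i < j := by
      rw [← OrderEmbedding.lt_iff_lt eO, hei, hej]
      exact hab
    rw [OrderEmbedding.lt_iff_lt eC]
    exact this
  have hmonoC : ∀ a b, a ∈ C → b ∈ C → a < b → f a < f b := by
    intro a b ha hb hab
    obtain ⟨i, hei, hfa⟩ := hfC a ha
    obtain ⟨j, hej, hfb⟩ := hfC b hb
    rw [hfa, hfb]
    have : i < j := by
      rw [← OrderEmbedding.lt_iff_lt eC, hei, hej]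
      exact hab
    rw [OrderEmbedding.lt_iff_lt eO]
    exact this
  have hmonoNon : ∀ a b, a ∉ O → b ∉ O → a < b → f a < f b := by
    intro a b haO hbO hab
    by_cases haC : a ∈ C
    · by_cases hbC : b ∈ C
      · exact hmonoC a b haC hbC hab
      · rw [hfF b hbO hbC]
        have := harcC a haC
        omega
    · rw [hfF a haO haC]
      by_cases hbC : b ∈ C
      · obtain ⟨i, hei, hfb⟩ := hfC b hbC
        rw [hfb]
        by_contra hcon
        push_neg at hcon
        have hne : eO i ≠ a := by
          intro h
          exact haO (h ▸ heOmem i)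
        have hlt2 : eO i < a := by omega
        have ha1 : 1 ≤ a := by
          have := (hOIcc _ (heOmem i)).1
          omega
        have han : a ≤ n := by
          have := (hCIcc _ (heCmem i)).2
          omega
        exact hnofix i a ha1 han haO haC ⟨hlt2, by omega⟩
      · rw [hfF b hbO hbC]
        exact hab
  set w := hinv.toPerm f with hw
  have hwcoe : ∀ k, w k = f k := by
    intro k
    rw [hw, Function.Involutive.coe_toPerm]
  have hsupp : ∀ k, f k ≠ k → 1 ≤ k ∧ k ≤ n := by
    intro k hk
    by_cases h1 : k ∈ O
    · exact hOIcc k h1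
    · by_cases h2 : k ∈ C
      · exact hCIcc k h2
      · exact absurd (hfF k h1 h2) hk
  refine ⟨w, ⟨fun k hk => hsupp k (by rw [← hwcoe k]; exact hk), ?_⟩, ?_, ?_⟩
  · -- w * w = 1
    ext k
    simp only [Equiv.Perm.mul_apply, Equiv.Perm.one_apply]
    rw [hwcoe, hwcoe]
    exact hinv k
  · -- Avoids321
    rintro p q r hp1 hpq hqr hrn ⟨hv1, hv2⟩
    rw [hwcoe, hwcoe] at hv1 hv2
    by_cases hpO : p ∈ O <;> by_cases hqO : q ∈ O <;> by_cases hrO : r ∈ O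
    · have := hmonoO p q hpO hqO hpq; omega
    · have := hmonoO p q hpO hqO hpq; omega
    · have := hmonoO p r hpO hrO (by omega); omega
    · have := hmonoNon q r hqO hrO hqr; omega
    · have := hmonoO q r hqO hrO hqr; omega
    · have := hmonoNon p r hpO hrO (by omega); omega
    · have := hmonoNon p q hpO hqO hpq; omega
    · have := hmonoNon p q hpO hqO hpq; omega
  · -- wordOf n w = l
    apply List.ext_getElem (by rw [wordOf_length, hlen])
    intro t h1 h2
    have htn : t < n := by rw [wordOf_length] at h1; exact h1
    have hlhs : (wordOf n w)[t] = entry w (t+1) := by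
      rw [← List.getD_eq_getElem _ 0 h1]
      exact wordOf_getD n w t htn 0
    rw [hlhs]
    have hrhs : l[t] = l.getD t 0 := (List.getD_eq_getElem _ 0 h2).symm
    rw [hrhs]
    set j := t + 1 with hj
    have hj1 : 1 ≤ j := by omega
    have hjn : j ≤ n := by omega
    have hjt : j - 1 = t := by omega
    rcases hletter j hj1 hjn with hlet | hlet | hlet
    · have hjO : j ∈ O := hmemO j hj1 hjn hlet
      have := harcO j hjO
      rw [hjt] at hlet
      rw [(entry_eq_one_iff w j).mpr (by rw [hwcoe]; omega), hlet]
    · have hjO : j ∉ O := by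
        intro hmem
        have := hOletter j hmem
        omega
      have hjC : j ∉ C := by
        intro hmem
        have := hCletter j hmem
        omega
      have := hfF j hjO hjC
      rw [hjt] at hlet
      rw [(entry_eq_zero_iff w j).mpr (by rw [hwcoe]; omega), hlet]
    · have hjC : j ∈ C := hmemC j hj1 hjn hlet
      have := harcC j hjC
      rw [hjt] at hlet
      rw [(entry_eq_negone_iff w j).mpr (by rw [hwcoe]; omega), hlet]

lemma mi_eq_VF (n : ℕ) : mi n = (VF n).card := by
  classical
  have hbij : Set.BijOn (wordOf n)
      {w : Equiv.Perm ℕ | IsInvolutionOn n w ∧ Avoids321 n w} ↑(VF n) := by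
    refine ⟨?_, ?_, ?_⟩
    · rintro w ⟨hw, ha⟩
      exact Finset.mem_coe.mpr (wordOf_valid hw ha)
    · rintro w1 ⟨hw1, ha1⟩ w2 ⟨hw2, ha2⟩ h
      exact wordOf_injOn hw1 ha1 hw2 ha2 h
    · intro l hl
      obtain ⟨w, hw1, hw2, hw3⟩ := exists_perm (Finset.mem_coe.mp hl)
      exact ⟨w, ⟨hw1, hw2⟩, hw3⟩
  have himg := Set.ncard_image_of_injOn hbij.injOn
  rw [mi, ← himg, hbij.image_eq, Set.ncard_coe_finset]

end
end Mi321

/-- The recursion `mi_n = mi_{n-1} + Σ_{i=1}^{⌊n/2⌋} C_{i-1} · mi_{n-2i}` for the numbers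
of 321-avoiding involutions, where `C_m` is the `m`-th Catalan number (note that
`mi 0 = 1` holds for the count defined above, since only the identity qualifies). -/
theorem mi_recursion (n : ℕ) (hn : 1 ≤ n) :
    mi n = mi (n - 1) + ∑ i ∈ Finset.Icc 1 (n / 2), catalan (i - 1) * mi (n - 2 * i) := by
  rw [Mi321.mi_eq_VF n, Mi321.mi_eq_VF (n-1), Mi321.VF_card_catalan n hn]
  congr 1
  apply Finset.sum_congr rfl
  intro i hi
  rw [Mi321.mi_eq_VF (n - 2*i)]
end

section
/- For every k ≥ 1, the binomial coefficient identity C(2k−1, k) = Σ_{i=1}^{k} C_{i−1} · C(2k−2i, k−i) holds, where C_m = (1/(m+1))·binom(2m, m) denotes the m-th Catalan number. -/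
open Finset

lemma cb_succ_aux (m : ℕ) :
    Nat.centralBinom (m + 1) + 2 * catalan m = 4 * Nat.centralBinom m := by
  apply Nat.eq_of_mul_eq_mul_left (show 0 < m + 1 by omega)
  have h1 := Nat.succ_mul_centralBinom_succ m
  have h2 := succ_mul_catalan_eq_centralBinom m
  nlinarith [h1, h2]

lemma two_choose_cb (n : ℕ) :
    2 * Nat.choose (2 * n + 1) n = Nat.centralBinom (n + 1) := by
  have : Nat.centralBinom (n + 1) = Nat.choose (2 * n + 2) (n + 1) := by
    unfold Nat.centralBinom; ring_nf
  rw [this, Nat.choose_succ_succ, Nat.choose_symm_half]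
  ring

lemma key_step (n : ℕ) :
    Nat.choose (2 * n + 3) (n + 1) + catalan (n + 1) = 4 * Nat.choose (2 * n + 1) n := by
  have h1 : 2 * Nat.choose (2 * (n + 1) + 1) (n + 1) = Nat.centralBinom (n + 2) :=
    two_choose_cb (n + 1)
  have h2 := two_choose_cb n
  have h3 := cb_succ_aux (n + 1)
  have : 2 * (n + 1) + 1 = 2 * n + 3 := by ring
  rw [this] at h1
  have e : n + 1 + 1 = n + 2 := by omega
  rw [e] at h3
  omega

lemma main_sum (n : ℕ) :
    ∑ j ∈ range (n + 1), catalan j * Nat.centralBinom (n - j)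
      = Nat.choose (2 * n + 1) n := by
  induction n with
  | zero => simp [Nat.centralBinom]
  | succ n ih =>
    have hcat : catalan (n + 1) = ∑ j ∈ range (n + 1), catalan j * catalan (n - j) := by
      rw [catalan_succ]
      rw [Finset.sum_range fun i => catalan i * catalan (n - i)]
    have hsplit : ∑ j ∈ range (n + 1 + 1), catalan j * Nat.centralBinom (n + 1 - j)
        = (∑ j ∈ range (n + 1), catalan j * Nat.centralBinom (n + 1 - j)) + catalan (n + 1) := by
      rw [Finset.sum_range_succ]
      simp [Nat.centralBinom]
    have hstep : (∑ j ∈ range (n + 1), catalan j * Nat.centralBinom (n + 1 - j))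
        + 2 * ∑ j ∈ range (n + 1), catalan j * catalan (n - j)
        = 4 * ∑ j ∈ range (n + 1), catalan j * Nat.centralBinom (n - j) := by
      rw [Finset.mul_sum, Finset.mul_sum, ← Finset.sum_add_distrib]
      apply Finset.sum_congr rfl
      intro j hj
      have hjn : j ≤ n := by simpa using Nat.lt_succ_iff.mp (Finset.mem_range.mp hj)
      have : n + 1 - j = (n - j) + 1 := by omega
      rw [this]
      have := cb_succ_aux (n - j)
      nlinarith [this]
    have hkey := key_step n
    have h23 : 2 * (n + 1) + 1 = 2 * n + 3 := by ring
    rw [h23]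
    omega

/-- The binomial coefficient identity `C(2k-1, k) = Σ_{i=1}^{k} C_{i-1} · C(2k-2i, k-i)`,
where `C_m` denotes the `m`-th Catalan number. -/
theorem choose_eq_sum_catalan_mul_choose (k : ℕ) (hk : 1 ≤ k) :
    Nat.choose (2 * k - 1) k =
      ∑ i ∈ Finset.Icc 1 k, catalan (i - 1) * Nat.choose (2 * k - 2 * i) (k - i) := by
  obtain ⟨n, rfl⟩ : ∃ n, k = n + 1 := ⟨k - 1, by omega⟩
  have hL : 2 * (n + 1) - 1 = 2 * n + 1 := by omega
  rw [hL]
  have hsym : Nat.choose (2 * n + 1) (n + 1) = Nat.choose (2 * n + 1) n :=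
    Nat.choose_symm_half n
  rw [hsym, ← main_sum n]
  rw [show Finset.Icc 1 (n + 1) = Finset.Ico 1 (n + 2) by rfl, Finset.sum_Ico_eq_sum_range]
  have : n + 2 - 1 = n + 1 := by omega
  rw [this]
  apply Finset.sum_congr rfl
  intro j hj
  have hjn : j ≤ n := by simpa using Nat.lt_succ_iff.mp (Finset.mem_range.mp hj)
  have h1 : 1 + j - 1 = j := by omega
  have h2 : 2 * (n + 1) - 2 * (1 + j) = 2 * (n - j) := by omega
  have h3 : n + 1 - (1 + j) = n - j := by omega
  rw [h1, h2, h3]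
  rfl
end
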